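/- arXiv:2501.00521 — 5 statements merged into one kernel-verified Lean document; each statement's English description precedes it below -/
import Mathlib

section
/- Let (W, S) be a Coxeter system, I ⊆ S, and t a reflection of W. For w ∈ W, we have twW_I = wW_I if and only if ℓ((tw)^I) = ℓ(w^I), where u^I denotes the minimal-length representative of the coset uW_I. -/
variable {B W : Type*} [Group W] {M : CoxeterMatrix B}

/-- The standard parabolic subgroup `W_I`. -/
def parab (cs : CoxeterSystem M W) (I : Set B) : Subgroup W :=
  Subgroup.closure (cs.simple '' I)

/-- `ℓ(w^I)`: the minimal length of an element in the coset `x = wW_I`. -/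
noncomputable def minLenQ (cs : CoxeterSystem M W) (I : Set B) (x : W ⧸ parab cs I) : ℕ :=
  sInf (cs.length '' {u : W | (QuotientGroup.mk u : W ⧸ parab cs I) = x})

namespace CoxAux

open CoxeterSystem List

attribute [local instance] Classical.propDecidable

variable (cs : CoxeterSystem M W)

/-- The sign-flipping involution attached to a simple reflection. -/
noncomputable def sigmaFun (i : B) : (W × ℤˣ) → (W × ℤˣ) :=
  fun x => (cs.simple i * x.1 * cs.simple i, if x.1 = cs.simple i then -x.2 else x.2)

theorem sigmaFun_involutive (i : B) : Function.Involutive (sigmaFun cs i) := by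
  rintro ⟨a, ε⟩
  unfold sigmaFun
  have h : cs.simple i * a * cs.simple i = cs.simple i ↔ a = cs.simple i := by
    constructor
    · intro h
      have := congrArg (fun z => cs.simple i * z * cs.simple i) h
      simpa [mul_assoc, cs.simple_mul_simple_cancel_left, cs.simple_mul_simple_cancel_right]
        using this
    · intro h; rw [h]; simp [cs.simple_mul_simple_self, cs.simple_mul_simple_cancel_right]
  by_cases hx : a = cs.simple i
  · simp [hx, h, cs.simple_mul_simple_self, cs.simple_mul_simple_cancel_right,
      cs.simple_mul_simple_cancel_left]
  · simp only [hx, if_neg, h, if_false]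
    rw [← mul_assoc]
    simp [mul_assoc, cs.simple_mul_simple_cancel_left, cs.simple_mul_simple_cancel_right, hx]

/-- The sign permutation attached to a simple reflection. -/
noncomputable def sigma (i : B) : Equiv.Perm (W × ℤˣ) := (sigmaFun_involutive cs i).toPerm

theorem sigma_apply (i : B) (x : W × ℤˣ) :
    sigma cs i x = (cs.simple i * x.1 * cs.simple i,
      if x.1 = cs.simple i then -x.2 else x.2) := rfl

theorem sigma_liftable : CoxeterMatrix.IsLiftable M (sigma cs) := by
  intro i j
  set m := M i j with hm
  set d := cs.simple i * cs.simple j with hd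
  have hdm : d ^ m = 1 := cs.simple_mul_simple_pow i j
  have hjd : cs.simple j * d = d⁻¹ * cs.simple j := by
    rw [hd, mul_inv_rev, cs.inv_simple, cs.inv_simple, ← mul_assoc]
  have hcomm : ∀ k : ℕ, cs.simple j * d ^ k = (d⁻¹) ^ k * cs.simple j := by
    intro k
    induction k with
    | zero => simp
    | succ k ih =>
      rw [pow_succ, ← mul_assoc, ih, mul_assoc, hjd, pow_succ, mul_assoc]
  have e1 : ∀ k : ℕ, (d⁻¹) ^ k * cs.simple j * d ^ k = (d⁻¹) ^ (2 * k) * cs.simple j := by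
    intro k
    rw [mul_assoc, hcomm, ← mul_assoc, ← pow_add, two_mul]
  have hsisj : cs.simple j * cs.simple i * cs.simple j = d⁻¹ * cs.simple j := by
    rw [hd, mul_inv_rev, cs.inv_simple, cs.inv_simple, mul_assoc]
  have e2 : ∀ k : ℕ, (d⁻¹) ^ k * (d⁻¹ * cs.simple j) * d ^ k = (d⁻¹) ^ (2 * k + 1) * cs.simple j := by
    intro k
    rw [mul_assoc, mul_assoc, hcomm, ← mul_assoc, ← mul_assoc]
    group
  have key : ∀ k : ℕ, ∀ x : W × ℤˣ,
      ((sigma cs i * sigma cs j) ^ k) x =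
        (d ^ k * x.1 * (d⁻¹) ^ k,
          x.2 * ∏ r ∈ Finset.range (2 * k),
            (if x.1 = (d⁻¹) ^ r * cs.simple j then (-1 : ℤˣ) else 1)) := by
    intro k
    induction k with
    | zero => intro x; simp
    | succ k ih =>
      intro x
      rw [pow_succ', Equiv.Perm.mul_apply, ih]
      rw [Equiv.Perm.mul_apply, sigma_apply, sigma_apply]
      have cond1 : (d ^ k * x.1 * (d⁻¹) ^ k = cs.simple j) ↔
          (x.1 = (d⁻¹) ^ (2 * k) * cs.simple j) := by
        rw [← e1 k]
        constructor
        · intro h; rw [← h]; group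
        · intro h; rw [h]; group
      have cond2 : (cs.simple j * (d ^ k * x.1 * (d⁻¹) ^ k) * cs.simple j = cs.simple i) ↔
          (x.1 = (d⁻¹) ^ (2 * k + 1) * cs.simple j) := by
        rw [← e2 k]
        constructor
        · intro h
          have h2 : d ^ k * x.1 * (d⁻¹) ^ k = cs.simple j * cs.simple i * cs.simple j := by
            have := congrArg (fun z => cs.simple j * z * cs.simple j) h
            simpa [mul_assoc, cs.simple_mul_simple_cancel_left,
              cs.simple_mul_simple_cancel_right] using this
          rw [hsisj] at h2
          rw [← h2]; group
        · intro h
          rw [h]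
          have : d ^ k * ((d⁻¹) ^ k * (d⁻¹ * cs.simple j) * d ^ k) * (d⁻¹) ^ k
              = d⁻¹ * cs.simple j := by group
          rw [this, ← hsisj]
          simp [mul_assoc, cs.simple_mul_simple_cancel_left,
            cs.simple_mul_simple_cancel_right, cs.simple_mul_simple_self]
      simp only [cond1, cond2]
      have hrange : 2 * (k + 1) = (2 * k) + 1 + 1 := by ring
      have hstep : ∀ a : W, cs.simple i * (cs.simple j * a * cs.simple j) * cs.simple i
          = d * a * d⁻¹ := by
        intro a
        rw [hd, mul_inv_rev, cs.inv_simple, cs.inv_simple]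
        group
      rw [hrange, Finset.prod_range_succ, Finset.prod_range_succ, Prod.mk.injEq]
      refine ⟨by rw [hstep]; group, ?_⟩
      by_cases h1 : x.1 = (d⁻¹) ^ (2 * k) * cs.simple j <;>
        by_cases h2 : x.1 = (d⁻¹) ^ (2 * k + 1) * cs.simple j <;>
        simp [h1, h2, mul_neg, neg_neg, mul_one, mul_assoc]
  apply Equiv.ext
  intro x
  rw [key m x, hdm]
  have hdm' : (d⁻¹) ^ m = 1 := by rw [inv_pow, hdm]; simp
  have hf : ∀ r : ℕ, (d⁻¹) ^ (m + r) = (d⁻¹) ^ r := by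
    intro r; rw [pow_add, hdm', one_mul]
  rw [two_mul, Finset.prod_range_add]
  simp only [hf]
  have : (∏ r ∈ Finset.range m, if x.1 = (d⁻¹) ^ r * cs.simple j then (-1 : ℤˣ) else 1) *
      (∏ r ∈ Finset.range m, if x.1 = (d⁻¹) ^ r * cs.simple j then (-1 : ℤˣ) else 1) = 1 :=
    Int.units_mul_self _
  rw [this, mul_one, hdm']
  simp

/-- The lifted sign homomorphism. -/
noncomputable def mu : W →* Equiv.Perm (W × ℤˣ) := cs.lift ⟨sigma cs, sigma_liftable cs⟩

theorem mu_simple (i : B) : mu cs (cs.simple i) = sigma cs i :=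
  cs.lift_apply_simple (sigma_liftable cs) i

/-- The sign cocycle. -/
noncomputable def cc (u x : W) : ℤˣ := ((mu cs u) (x, 1)).2

theorem mu_apply (u : W) : ∀ x : W, ∀ ε : ℤˣ,
    (mu cs u) (x, ε) = (u * x * u⁻¹, ε * cc cs u x) := by
  induction u using cs.simple_induction_left with
  | one =>
    intro x ε
    simp [cc, map_one]
  | mul_simple_left w i ih =>
    intro x ε
    have h1 : mu cs (cs.simple i * w) = sigma cs i * mu cs w := by
      rw [map_mul, mu_simple]
    have h2 : ∀ δ : ℤˣ, (mu cs (cs.simple i * w)) (x, δ) =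
        (cs.simple i * (w * x * w⁻¹) * cs.simple i,
          if w * x * w⁻¹ = cs.simple i then -(δ * cc cs w x) else δ * cc cs w x) := by
      intro δ
      rw [h1, Equiv.Perm.mul_apply, ih x δ, sigma_apply]
    have hc : cc cs (cs.simple i * w) x =
        if w * x * w⁻¹ = cs.simple i then -(cc cs w x) else cc cs w x := by
      rw [cc, h2 1, one_mul]
    rw [h2 ε, hc, Prod.mk.injEq]
    constructor
    · rw [mul_inv_rev, cs.inv_simple]; group
    · by_cases h : w * x * w⁻¹ = cs.simple i <;> simp [h, mul_neg]

theorem cc_mul (a b x : W) : cc cs (a * b) x = cc cs b x * cc cs a (b * x * b⁻¹) := by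
  have : (mu cs (a * b)) (x, 1) = (mu cs a) ((mu cs b) (x, 1)) := by
    rw [map_mul, Equiv.Perm.mul_apply]
  rw [mu_apply, mu_apply, mu_apply] at this
  have := congrArg Prod.snd this
  simpa using this

theorem cc_one (x : W) : cc cs 1 x = 1 := by simp [cc, map_one]

theorem cc_inv_mul_cancel (a x : W) : cc cs a x * cc cs a⁻¹ (a * x * a⁻¹) = 1 := by
  have := cc_mul cs a⁻¹ a x
  rw [inv_mul_cancel, cc_one] at this
  exact this.symm

theorem cc_simple (i : B) (x : W) :
    cc cs (cs.simple i) x = if x = cs.simple i then -1 else 1 := by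
  rw [cc, mu_simple, sigma_apply]

theorem cc_wordProd_inv (ω : List B) (t : W) :
    cc cs (cs.wordProd ω)⁻¹ t = (-1) ^ (List.count t (cs.leftInvSeq ω)) := by
  induction ω using List.reverseRecOn with
  | nil => simp [cc_one]
  | append_singleton ω i ih =>
    rw [← List.concat_eq_append, cs.wordProd_concat, mul_inv_rev, cs.inv_simple]
    rw [cc_mul, inv_inv]
    have hconj : ((cs.wordProd ω)⁻¹ * t * cs.wordProd ω = cs.simple i) ↔
        (cs.wordProd ω * cs.simple i * (cs.wordProd ω)⁻¹ = t) := by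
      constructor
      · intro h; rw [← h]; group
      · intro h; rw [← h]; group
    rw [cc_simple, ih, cs.leftInvSeq_concat, List.concat_eq_append, List.count_append]
    by_cases h : cs.wordProd ω * cs.simple i * (cs.wordProd ω)⁻¹ = t
    · rw [if_pos (hconj.mpr h)]
      simp [h, pow_succ]
    · rw [if_neg (fun hc => h (hconj.mp hc))]
      simp [List.count_cons, h]

theorem cc_reflection_self {t : W} (ht : cs.IsReflection t) : cc cs t t = -1 := by
  obtain ⟨v, i, rfl⟩ := ht
  set t := v * cs.simple i * v⁻¹ with hT
  have h1 : cc cs (v * (cs.simple i * v⁻¹)) t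
      = cc cs (cs.simple i * v⁻¹) t * cc cs v ((cs.simple i * v⁻¹) * t * (cs.simple i * v⁻¹)⁻¹) :=
    cc_mul cs v (cs.simple i * v⁻¹) t
  have h2 : (cs.simple i * v⁻¹) * t * (cs.simple i * v⁻¹)⁻¹ = cs.simple i := by
    rw [hT, mul_inv_rev, cs.inv_simple, inv_inv]
    simp [mul_assoc, inv_mul_cancel_left, cs.simple_mul_simple_cancel_left,
      cs.simple_mul_simple_self]
  have h3 : cc cs (cs.simple i * v⁻¹) t = cc cs v⁻¹ t * cc cs (cs.simple i) (v⁻¹ * t * v) := by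
    have := cc_mul cs (cs.simple i) v⁻¹ t
    rw [inv_inv] at this
    exact this
  have h4 : v⁻¹ * t * v = cs.simple i := by
    rw [hT]; group
  have h5 : cc cs v (cs.simple i) * cc cs v⁻¹ t = 1 := by
    have := cc_inv_mul_cancel cs v (cs.simple i)
    rwa [← hT] at this
  have h6 : cc cs (cs.simple i) (cs.simple i) = -1 := by rw [cc_simple]; simp
  calc cc cs t t = cc cs (v * (cs.simple i * v⁻¹)) t := by rw [hT, mul_assoc]
    _ = (cc cs v⁻¹ t * cc cs (cs.simple i) (cs.simple i)) * cc cs v (cs.simple i) := by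
        rw [h1, h2, h3, h4]
    _ = (cc cs v (cs.simple i) * cc cs v⁻¹ t) * cc cs (cs.simple i) (cs.simple i) := by
        ac_rfl
    _ = -1 := by rw [h5, h6, one_mul]

theorem lt_of_cc_neg {t : W} (ht : cs.IsReflection t) (w : W)
    (h : cc cs w⁻¹ t = -1) : cs.length (t * w) < cs.length w := by
  obtain ⟨ω, hred, rfl⟩ := cs.exists_reduced_word' w
  rw [cc_wordProd_inv] at h
  have hodd : Odd (List.count t (cs.leftInvSeq ω)) := by
    rcases Nat.even_or_odd (List.count t (cs.leftInvSeq ω)) with he | ho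
    · exfalso
      rw [he.neg_one_pow] at h
      exact absurd h (by decide)
    · exact ho
  have hmem : t ∈ cs.leftInvSeq ω := by
    by_contra hnot
    rw [List.count_eq_zero_of_not_mem hnot] at hodd
    simp at hodd
  exact (cs.isLeftInversion_of_mem_leftInvSeq hred hmem).2

theorem cc_eq_neg_one_iff {t : W} (ht : cs.IsReflection t) (w : W) :
    cc cs w⁻¹ t = -1 ↔ cs.length (t * w) < cs.length w := by
  constructor
  · exact lt_of_cc_neg cs ht w
  · intro hlt
    have htw : t * (t * w) = w := by rw [← mul_assoc, ht.mul_self, one_mul]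
    have hne : cc cs (t * w)⁻¹ t ≠ -1 := by
      intro hc
      have := lt_of_cc_neg cs ht (t * w) hc
      rw [htw] at this
      exact absurd this (not_lt.mpr (le_of_lt hlt))
    have h1 : cc cs (t * w)⁻¹ t = 1 := by
      rcases Int.units_eq_one_or (cc cs (t * w)⁻¹ t) with h | h
      · exact h
      · exact absurd h hne
    have hw : w⁻¹ = (t * w)⁻¹ * t := by
      rw [mul_inv_rev, mul_assoc, ht.inv, ht.mul_self, mul_one]
    have httt : t * t * t⁻¹ = t := by rw [ht.mul_self, one_mul, ht.inv]
    rw [hw, cc_mul, httt, cc_reflection_self cs ht, h1, mul_one]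

/-- Strong exchange: a left inversion occurs in the left inversion sequence of any word. -/
theorem mem_leftInvSeq_of_isLeftInversion {t : W} (ht : cs.IsReflection t) (ω : List B)
    (hlt : cs.length (t * cs.wordProd ω) < cs.length (cs.wordProd ω)) :
    t ∈ cs.leftInvSeq ω := by
  have h := (cc_eq_neg_one_iff cs ht (cs.wordProd ω)).mpr hlt
  rw [cc_wordProd_inv] at h
  by_contra hnot
  rw [List.count_eq_zero_of_not_mem hnot] at h
  rw [pow_zero] at h
  exact absurd h (by decide)

variable {I : Set B}

theorem wordProd_mem_parab {θ : List B} (hθ : ∀ i ∈ θ, i ∈ I) :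
    cs.wordProd θ ∈ parab cs I := by
  induction θ with
  | nil => simp [one_mem]
  | cons i θ ih =>
    rw [cs.wordProd_cons]
    exact mul_mem (Subgroup.subset_closure ⟨i, hθ i (List.mem_cons_self), rfl⟩)
      (ih fun j hj => hθ j (List.mem_cons_of_mem i hj))

theorem parab_exists_word {y : W} (hy : y ∈ parab cs I) :
    ∃ θ : List B, (∀ i ∈ θ, i ∈ I) ∧ cs.wordProd θ = y := by
  induction hy using Subgroup.closure_induction with
  | mem x hx =>
    obtain ⟨i, hi, rfl⟩ := hx
    exact ⟨[i], by simpa using hi, by simp⟩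
  | one => exact ⟨[], by simp, by simp⟩
  | mul x y hx hy ihx ihy =>
    obtain ⟨θ₁, h₁, rfl⟩ := ihx
    obtain ⟨θ₂, h₂, rfl⟩ := ihy
    exact ⟨θ₁ ++ θ₂, fun i hi => (List.mem_append.mp hi).elim (h₁ i) (h₂ i),
      by rw [cs.wordProd_append]⟩
  | inv x hx ihx =>
    obtain ⟨θ, h, rfl⟩ := ihx
    exact ⟨θ.reverse, fun i hi => h i (List.mem_reverse.mp hi), by rw [cs.wordProd_reverse]⟩

theorem exists_reduced_word_subset {θ : List B} (hθ : ∀ i ∈ θ, i ∈ I) :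
    ∃ θ' : List B, (∀ i ∈ θ', i ∈ I) ∧ cs.wordProd θ' = cs.wordProd θ ∧ cs.IsReduced θ' := by
  induction θ using List.reverseRecOn with
  | nil => exact ⟨[], by simp, rfl, by simp [CoxeterSystem.IsReduced]⟩
  | append_singleton θ i ih =>
    obtain ⟨θ', hsub, heq, hred⟩ := ih (fun j hj => hθ j (List.mem_append_left _ hj))
    have hiI : i ∈ I := hθ i (List.mem_append_right _ (List.mem_singleton_self i))
    rw [← List.concat_eq_append, cs.wordProd_concat, ← heq]
    rcases cs.length_mul_simple (cs.wordProd θ') i with hup | hdown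
    · refine ⟨θ'.concat i, ?_, by rw [cs.wordProd_concat], ?_⟩
      · intro j hj
        simp only [List.concat_eq_append, List.mem_append, List.mem_singleton] at hj
        rcases hj with h | h
        · exact hsub j h
        · rwa [h]
      · rw [CoxeterSystem.IsReduced, cs.wordProd_concat, hup, List.length_concat, hred]
    · -- descent case: use strong exchange
      set t := cs.wordProd θ' * cs.simple i * (cs.wordProd θ')⁻¹ with hT
      have htrefl : cs.IsReflection t := ⟨cs.wordProd θ', i, rfl⟩
      have htw : t * cs.wordProd θ' = cs.wordProd θ' * cs.simple i := by
        rw [hT]; group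
      have hlt : cs.length (t * cs.wordProd θ') < cs.length (cs.wordProd θ') := by
        rw [htw]; omega
      have hmem := mem_leftInvSeq_of_isLeftInversion cs htrefl θ' hlt
      obtain ⟨j, hj, hget⟩ := List.mem_iff_getElem.mp hmem
      have hjlen : j < θ'.length := by
        rwa [cs.length_leftInvSeq] at hj
      have hgetD : (cs.leftInvSeq θ').getD j 1 = t := by
        rw [List.getD_eq_getElem _ _ hj, hget]
      have herase : cs.wordProd θ' * cs.simple i = cs.wordProd (θ'.eraseIdx j) := by
        rw [← htw, ← cs.getD_leftInvSeq_mul_wordProd θ' j, hgetD]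
      refine ⟨θ'.eraseIdx j, ?_, herase.symm, ?_⟩
      · intro k hk
        exact hsub k ((List.eraseIdx_sublist θ' j).subset hk)
      · have hlen := List.length_eraseIdx_add_one hjlen
        have hred' : cs.length (cs.wordProd θ') = θ'.length := hred
        rw [CoxeterSystem.IsReduced, ← herase]
        omega

theorem leftInvSeq_mem_parab {θ : List B} (hθ : ∀ i ∈ θ, i ∈ I) {t : W}
    (htmem : t ∈ cs.leftInvSeq θ) : t ∈ parab cs I := by
  obtain ⟨j, hj, rfl⟩ := List.mem_iff_getElem.mp htmem
  have hjlen : j < θ.length := by rwa [cs.length_leftInvSeq] at hj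
  have h := cs.getD_leftInvSeq θ j
  rw [List.getD_eq_getElem _ _ hj] at h
  rw [h]
  have hsome : θ[j]? = some (θ[j]) := by
    rw [List.getElem?_eq_getElem hjlen]
  rw [hsome]
  simp only [Option.map_some, Option.getD_some]
  refine mul_mem (mul_mem ?_ ?_) (inv_mem ?_)
  · exact wordProd_mem_parab cs (fun k hk => hθ k (List.take_subset j θ hk))
  · exact Subgroup.subset_closure ⟨θ[j], hθ _ (List.getElem_mem hjlen), rfl⟩
  · exact wordProd_mem_parab cs (fun k hk => hθ k (List.take_subset j θ hk))

theorem refl_mem_parab {y t : W} (hy : y ∈ parab cs I) (ht : cs.IsReflection t)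
    (hlt : cs.length (t * y) < cs.length y) : t ∈ parab cs I := by
  obtain ⟨θ, hθ, rfl⟩ := parab_exists_word cs hy
  exact leftInvSeq_mem_parab cs hθ (mem_leftInvSeq_of_isLeftInversion cs ht θ hlt)

theorem exists_min_rep (x : W ⧸ parab cs I) :
    ∃ u : W, (QuotientGroup.mk u : W ⧸ parab cs I) = x ∧ cs.length u = minLenQ cs I x := by
  have hne : (cs.length '' {u : W | (QuotientGroup.mk u : W ⧸ parab cs I) = x}).Nonempty :=
    ⟨cs.length x.out, ⟨x.out, QuotientGroup.out_eq' x, rfl⟩⟩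
  obtain ⟨u, hu, hlen⟩ := Nat.sInf_mem hne
  exact ⟨u, hu, hlen⟩

theorem minLenQ_le (x : W ⧸ parab cs I) {v : W}
    (hv : (QuotientGroup.mk v : W ⧸ parab cs I) = x) : minLenQ cs I x ≤ cs.length v :=
  Nat.sInf_le ⟨v, hv, rfl⟩

end CoxAux

open CoxAux in
/-- For a reflection `t` and `w ∈ W`, `twW_I = wW_I` if and only if `ℓ((tw)^I) = ℓ(w^I)`. -/
theorem fixed_coset_iff_length_eq (cs : CoxeterSystem M W) (I : Set B) (t : W)
    (ht : cs.IsReflection t) (w : W) :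
    (QuotientGroup.mk (t * w) : W ⧸ parab cs I) = QuotientGroup.mk w ↔
      minLenQ cs I (QuotientGroup.mk (t * w)) = minLenQ cs I (QuotientGroup.mk w) := by
  constructor
  · intro h; rw [h]
  · intro hlen
    by_contra hne
    obtain ⟨u, hu, hulen⟩ := exists_min_rep cs (QuotientGroup.mk w)
    obtain ⟨x, hx, hxlen⟩ := exists_min_rep cs (QuotientGroup.mk (t * w))
    have hux : cs.length u = cs.length x := by rw [hulen, hxlen, hlen]
    have httt : t * t * t⁻¹ = t := by rw [ht.mul_self, one_mul, ht.inv]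
    -- t * u lies in the coset of t * w
    have hmktu : (QuotientGroup.mk (t * u) : W ⧸ parab cs I) = QuotientGroup.mk (t * w) := by
      rw [QuotientGroup.eq]
      have h' : (t * u)⁻¹ * (t * w) = u⁻¹ * w := by group
      rw [h']
      exact QuotientGroup.eq.mp hu
    -- t * x lies in the coset of w
    have hmktx : (QuotientGroup.mk (t * x) : W ⧸ parab cs I) = QuotientGroup.mk w := by
      rw [QuotientGroup.eq]
      have h1 : x⁻¹ * (t * w) ∈ parab cs I := QuotientGroup.eq.mp hx
      have h' : (t * x)⁻¹ * w = x⁻¹ * (t * w) := by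
        rw [mul_inv_rev, ht.inv]
        group
      rw [h']
      exact h1
    have h1 : cs.length u < cs.length (t * u) := by
      have hle : cs.length u ≤ cs.length (t * u) := by
        calc cs.length u = minLenQ cs I (QuotientGroup.mk (t * w)) := by rw [hulen, hlen]
          _ ≤ cs.length (t * u) := minLenQ_le cs _ hmktu
      exact lt_of_le_of_ne hle (Ne.symm (ht.length_mul_right_ne u))
    have h2 : cs.length x < cs.length (t * x) := by
      have hle : cs.length x ≤ cs.length (t * x) := by
        calc cs.length x = minLenQ cs I (QuotientGroup.mk w) := by rw [hxlen, hlen]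
          _ ≤ cs.length (t * x) := minLenQ_le cs _ hmktx
      exact lt_of_le_of_ne hle (Ne.symm (ht.length_mul_right_ne x))
    have hcu : cc cs u⁻¹ t = 1 := by
      rcases Int.units_eq_one_or (cc cs u⁻¹ t) with h | h
      · exact h
      · exact absurd ((cc_eq_neg_one_iff cs ht u).mp h) (not_lt.mpr (le_of_lt h1))
    have hcx : cc cs x⁻¹ t = 1 := by
      rcases Int.units_eq_one_or (cc cs x⁻¹ t) with h | h
      · exact h
      · exact absurd ((cc_eq_neg_one_iff cs ht x).mp h) (not_lt.mpr (le_of_lt h2))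
    set y := x⁻¹ * (t * u) with hy
    have hyP : y ∈ parab cs I := QuotientGroup.eq.mp (hx.trans hmktu.symm)
    set r := u⁻¹ * t * u with hr
    have hrrefl : cs.IsReflection r := by
      have := ht.conj u⁻¹
      rwa [inv_inv] at this
    have hxinv : x⁻¹ = y * u⁻¹ * t := by
      rw [hy]
      simp only [mul_assoc, mul_inv_cancel_left]
      rw [ht.mul_self, mul_one]
    have hchain : cc cs x⁻¹ t = -1 * cc cs y r := by
      calc cc cs x⁻¹ t = cc cs ((y * u⁻¹) * t) t := by rw [hxinv]
        _ = cc cs t t * cc cs (y * u⁻¹) (t * t * t⁻¹) := cc_mul cs (y * u⁻¹) t t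
        _ = -1 * cc cs (y * u⁻¹) t := by rw [httt, cc_reflection_self cs ht]
        _ = -1 * (cc cs u⁻¹ t * cc cs y (u⁻¹ * t * u⁻¹⁻¹)) := by rw [cc_mul cs y u⁻¹ t]
        _ = -1 * cc cs y r := by rw [inv_inv, hcu, one_mul, ← hr]
    have hccyr : cc cs y r = -1 := by
      rw [hcx] at hchain
      have := congrArg (fun z => (-1 : ℤˣ) * z) hchain
      simpa using this.symm
    have hry : cs.length (r * y⁻¹) < cs.length y⁻¹ := by
      apply (cc_eq_neg_one_iff cs hrrefl y⁻¹).mp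
      rwa [inv_inv]
    have hrP : r ∈ parab cs I := refl_mem_parab cs (inv_mem hyP) hrrefl hry
    -- derive contradiction
    apply hne
    have hmktuu : (QuotientGroup.mk (t * u) : W ⧸ parab cs I) = QuotientGroup.mk u := by
      rw [QuotientGroup.eq]
      have h' : (t * u)⁻¹ * u = r := by rw [hr, mul_inv_rev, ht.inv]; done
      rw [h']
      exact hrP
    calc (QuotientGroup.mk (t * w) : W ⧸ parab cs I) = QuotientGroup.mk (t * u) := hmktu.symm
      _ = QuotientGroup.mk u := hmktuu
      _ = QuotientGroup.mk w := hu
end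

section
/- Let (W, S) be a Coxeter system, I₁, …, I_r ⊆ S, and t a reflection of W. Define, for each i, L_i = {wW_i : ℓ((tw)^{I_i}) > ℓ(w^{I_i})}, R_i = {wW_i : ℓ((tw)^{I_i}) < ℓ(w^{I_i})}, F_i = {wW_i : ℓ((tw)^{I_i}) = ℓ(w^{I_i})}. Then no edge (wW_1, …, wW_r) of the (I₁,…,I_r; W, S)-hypergraph contains both a vertex in some L_i and a vertex in some R_j. That is, F = ∪_i F_i is a vertex cut separating L = ∪_i L_i from R = ∪_i R_i. -/
variable {B W : Type*} [Group W] {M : CoxeterMatrix B}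

namespace CoxHelperSE

open List CoxeterSystem

noncomputable local instance : DecidableEq W := Classical.decEq W

variable (cs : CoxeterSystem M W)

/-! ### The Bourbaki parity action -/

/-- The monoid action of the `i`-th simple reflection on `W × ZMod 2` used to count
inversions. -/
noncomputable def sig (i : B) : Function.End (W × ZMod 2) :=
  fun p => (cs.simple i * p.1 * cs.simple i, p.2 + if p.1 = cs.simple i then 1 else 0)

lemma ris_cons (i : B) (ω : List B) :
    cs.rightInvSeq (i :: ω) =
      ((cs.wordProd ω)⁻¹ * cs.simple i * cs.wordProd ω) :: cs.rightInvSeq ω := rfl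

lemma prod_sig_apply (ω : List B) (t : W) (ε : ZMod 2) :
    (List.prod (ω.map (sig cs)) : Function.End (W × ZMod 2)) (t, ε) =
      (cs.wordProd ω * t * (cs.wordProd ω)⁻¹,
        ε + ((cs.rightInvSeq ω).count t : ZMod 2)) := by
  induction ω with
  | nil =>
    show (t, ε) = _
    simp
  | cons i ω ih =>
    have hstep : (List.prod ((i :: ω).map (sig cs)) : Function.End (W × ZMod 2)) (t, ε)
        = sig cs i ((List.prod (ω.map (sig cs)) : Function.End (W × ZMod 2)) (t, ε)) := rfl
    rw [hstep, ih, ris_cons]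
    have hcond : (cs.wordProd ω * t * (cs.wordProd ω)⁻¹ = cs.simple i)
        ↔ ((cs.wordProd ω)⁻¹ * cs.simple i * cs.wordProd ω = t) := by
      constructor
      · intro h; rw [← h]; group
      · intro h; rw [← h]; group
    have hfst : cs.simple i * (cs.wordProd ω * t * (cs.wordProd ω)⁻¹) * cs.simple i
        = cs.wordProd (i :: ω) * t * (cs.wordProd (i :: ω))⁻¹ := by
      rw [cs.wordProd_cons]
      rw [mul_inv_rev, cs.inv_simple]
      group
    refine Prod.ext hfst ?_
    simp only [sig, List.count_cons]
    by_cases hc : (cs.wordProd ω)⁻¹ * cs.simple i * cs.wordProd ω = t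
    · rw [if_pos (hcond.mpr hc), if_pos (by simp [hc])]
      push_cast
      ring
    · rw [if_neg (fun h => hc (hcond.mp h)), if_neg (by simp [hc])]
      push_cast
      ring

/-! ### Alternating words -/

lemma drop_alt (i j : B) : ∀ (n d : ℕ),
    List.drop d (alternatingWord i j n) = alternatingWord i j (n - d) := by
  intro n
  induction n with
  | zero => intro d; simp [alternatingWord]
  | succ n ih =>
    intro d
    cases d with
    | zero => simp
    | succ d =>
      rw [alternatingWord_succ' i j n, List.drop_succ_cons, ih d]
      congr 1
      omega

lemma getElem?_alt (i j : B) (n k : ℕ) (h : k < n) :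
    (alternatingWord i j n)[k]? = some (if Even (n - k - 1) then j else i) := by
  have h1 : (alternatingWord i j n)[k]? = (List.drop k (alternatingWord i j n))[0]? := by
    simpa using (List.getElem?_drop (alternatingWord i j n) k 0).symm
  have h2 : n - k = (n - k - 1) + 1 := by omega
  rw [h1, drop_alt, h2, alternatingWord_succ' i j (n - k - 1)]
  simp

lemma flip_b (i j : B) (d : ℤ) :
    cs.simple j * (cs.simple i * cs.simple j) ^ d
      = (cs.simple i * cs.simple j) ^ (-d) * cs.simple j := by
  have hb : cs.simple j * (cs.simple i * cs.simple j) * (cs.simple j)⁻¹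
      = (cs.simple i * cs.simple j)⁻¹ := by
    have : (cs.simple i * cs.simple j)⁻¹ = cs.simple j * cs.simple i := by
      rw [mul_inv_rev, cs.inv_simple, cs.inv_simple]
    rw [this]
    group
  have h := map_zpow (MulAut.conj (cs.simple j)) (cs.simple i * cs.simple j) d
  simp only [MulAut.conj_apply] at h
  rw [hb, inv_zpow, ← zpow_neg] at h
  calc cs.simple j * (cs.simple i * cs.simple j) ^ d
      = (cs.simple j * (cs.simple i * cs.simple j) ^ d * (cs.simple j)⁻¹) * cs.simple j := by
        group
    _ = (cs.simple i * cs.simple j) ^ (-d) * cs.simple j := by rw [h]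

/-- The conjugates appearing in the right inversion sequence of an alternating word. -/
lemma Q_formula (i j : B) (n : ℕ) :
    (cs.wordProd (alternatingWord i j n))⁻¹
        * cs.simple (if Even n then j else i)
        * cs.wordProd (alternatingWord i j n)
      = (cs.simple i * cs.simple j) ^ (-(n : ℤ)) * cs.simple j := by
  have hflip := flip_b cs i j
  rw [cs.prod_alternatingWord_eq_mul_pow]
  rcases Nat.even_or_odd n with he | ho
  · obtain ⟨d, hd⟩ := he
    have hnd : n / 2 = d := by omega
    rw [if_pos ⟨d, hd⟩, if_pos ⟨d, hd⟩, one_mul, hnd,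
      (zpow_natCast (cs.simple i * cs.simple j) d).symm]
    calc ((cs.simple i * cs.simple j) ^ (d:ℤ))⁻¹ * cs.simple j
          * (cs.simple i * cs.simple j) ^ (d:ℤ)
        = (cs.simple i * cs.simple j) ^ (-(d:ℤ))
          * (cs.simple j * (cs.simple i * cs.simple j) ^ (d:ℤ)) := by group
      _ = (cs.simple i * cs.simple j) ^ (-(d:ℤ))
          * ((cs.simple i * cs.simple j) ^ (-(d:ℤ)) * cs.simple j) := by rw [hflip]
      _ = (cs.simple i * cs.simple j) ^ (-(d:ℤ) + -(d:ℤ)) * cs.simple j := by group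
      _ = (cs.simple i * cs.simple j) ^ (-(n:ℤ)) * cs.simple j := by
          congr 2
          omega
  · obtain ⟨d, hd⟩ := ho
    have hne : ¬ Even n := by rw [hd]; exact Nat.not_even_iff_odd.mpr ⟨d, rfl⟩
    have hnd : n / 2 = d := by omega
    have hbab : cs.simple j * cs.simple i * cs.simple j
        = (cs.simple i * cs.simple j) ^ (-1 : ℤ) * cs.simple j := by
      have : (cs.simple i * cs.simple j) ^ (-1 : ℤ) = cs.simple j * cs.simple i := by
        rw [zpow_neg_one, mul_inv_rev, cs.inv_simple, cs.inv_simple]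
      rw [this]
    rw [if_neg hne, if_neg hne, hnd, (zpow_natCast (cs.simple i * cs.simple j) d).symm]
    calc (cs.simple j * (cs.simple i * cs.simple j) ^ (d:ℤ))⁻¹ * cs.simple i
          * (cs.simple j * (cs.simple i * cs.simple j) ^ (d:ℤ))
        = (cs.simple i * cs.simple j) ^ (-(d:ℤ))
          * ((cs.simple j)⁻¹ * cs.simple i * cs.simple j)
          * (cs.simple i * cs.simple j) ^ (d:ℤ) := by group
      _ = (cs.simple i * cs.simple j) ^ (-(d:ℤ))
          * (cs.simple j * cs.simple i * cs.simple j)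
          * (cs.simple i * cs.simple j) ^ (d:ℤ) := by rw [cs.inv_simple]
      _ = (cs.simple i * cs.simple j) ^ (-(d:ℤ))
          * ((cs.simple i * cs.simple j) ^ (-1:ℤ) * cs.simple j)
          * (cs.simple i * cs.simple j) ^ (d:ℤ) := by rw [hbab]
      _ = (cs.simple i * cs.simple j) ^ (-(d:ℤ)) * (cs.simple i * cs.simple j) ^ (-1:ℤ)
          * (cs.simple j * (cs.simple i * cs.simple j) ^ (d:ℤ)) := by group
      _ = (cs.simple i * cs.simple j) ^ (-(d:ℤ)) * (cs.simple i * cs.simple j) ^ (-1:ℤ)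
          * ((cs.simple i * cs.simple j) ^ (-(d:ℤ)) * cs.simple j) := by rw [hflip]
      _ = (cs.simple i * cs.simple j) ^ (-(n:ℤ)) * cs.simple j := by
          have hexp : (-(n:ℤ)) = -(d:ℤ) + -1 + -(d:ℤ) := by omega
          rw [hexp, zpow_add, zpow_add, zpow_neg_one]
          group

lemma ris_alt_getD (i j : B) (m k : ℕ) (hk : k < 2 * m) :
    (cs.rightInvSeq (alternatingWord i j (2 * m))).getD k 1
      = (cs.simple i * cs.simple j) ^ (-((2 * m - k - 1 : ℕ) : ℤ)) * cs.simple j := by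
  rw [cs.getD_rightInvSeq, drop_alt]
  have hget : (alternatingWord i j (2 * m))[k]?
      = some (if Even (2 * m - k - 1) then j else i) := by
    exact getElem?_alt i j (2 * m) k hk
  rw [hget]
  have : (Option.map cs.simple (some (if Even (2 * m - k - 1) then j else i))).getD 1
      = cs.simple (if Even (2 * m - k - 1) then j else i) := rfl
  rw [this]
  have h2 : 2 * m - (k + 1) = 2 * m - k - 1 := by omega
  rw [h2]
  exact Q_formula cs i j (2 * m - k - 1)

lemma take_eq_drop_ris_alt (i j : B) :
    List.take (M i j) (cs.rightInvSeq (alternatingWord i j (2 * M i j)))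
      = List.drop (M i j) (cs.rightInvSeq (alternatingWord i j (2 * M i j))) := by
  set m := M i j with hm
  set L := cs.rightInvSeq (alternatingWord i j (2 * m)) with hL
  have hlen : L.length = 2 * m := by
    rw [hL, CoxeterSystem.length_rightInvSeq, length_alternatingWord]
  apply List.ext_getElem
  · simp [hlen]; omega
  · intro n h1 h2
    have hn : n < m := by simp [hlen] at h1; omega
    rw [List.getElem_take, List.getElem_drop]
    have e1 : L[n] = L.getD n 1 := (List.getD_eq_getElem L 1 (by omega)).symm
    have e2 : L[m + n] = L.getD (m + n) 1 := (List.getD_eq_getElem L 1 (by omega)).symm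
    rw [e1, e2, hL, ris_alt_getD cs i j m n (by omega), ris_alt_getD cs i j m (m + n) (by omega)]
    have hsub : (2 * m - n - 1 : ℕ) = (2 * m - (m + n) - 1) + m := by omega
    rw [hsub]
    push_cast
    rw [neg_add, zpow_add]
    have hcm : (cs.simple i * cs.simple j) ^ (-(m:ℤ)) = 1 := by
      rw [zpow_neg, zpow_natCast, hm, cs.simple_mul_simple_pow, inv_one]
    rw [hcm, mul_one]

lemma count_even_ris_alt (i j : B) (t : W) :
    Even ((cs.rightInvSeq (alternatingWord i j (2 * M i j))).count t) := by
  set m := M i j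
  set L := cs.rightInvSeq (alternatingWord i j (2 * m)) with hL
  have : L = List.take m L ++ List.drop m L := (List.take_append_drop m L).symm
  rw [this, List.count_append, ← take_eq_drop_ris_alt cs i j]
  exact ⟨_, rfl⟩

lemma prod_sig_alt (i j : B) (m : ℕ) :
    ((alternatingWord i j (2 * m)).map (sig cs)).prod = (sig cs i * sig cs j) ^ m := by
  induction m with
  | zero => simp [alternatingWord]
  | succ m ih =>
    have h1 : 2 * (m + 1) = (2 * m + 1) + 1 := by omega
    have h2 : alternatingWord i j (2 * (m + 1)) = i :: j :: alternatingWord i j (2 * m) := by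
      rw [h1, alternatingWord_succ' i j (2 * m + 1), alternatingWord_succ' i j (2 * m)]
      simp [Nat.even_add_one, parity_simps]
    rw [h2]
    simp only [List.map_cons, List.prod_cons]
    rw [ih, pow_succ']
    rw [← mul_assoc]

lemma sig_liftable : M.IsLiftable (sig cs) := by
  intro i j
  rw [← prod_sig_alt cs i j (M i j)]
  funext p
  obtain ⟨t, ε⟩ := p
  rw [prod_sig_apply]
  have hπ : cs.wordProd (alternatingWord i j (2 * M i j)) = 1 := by
    rw [cs.prod_alternatingWord_eq_mul_pow]
    rw [if_pos ⟨M i j, by ring⟩, one_mul]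
    have : 2 * M i j / 2 = M i j := by omega
    rw [this, cs.simple_mul_simple_pow]
  have hcount : (((cs.rightInvSeq (alternatingWord i j (2 * M i j))).count t : ℕ) : ZMod 2) = 0 := by
    rw [ZMod.natCast_eq_zero_iff]
    exact (count_even_ris_alt cs i j t).two_dvd
  rw [hπ, hcount]
  show _ = (t, ε)
  simp

/-- The parity homomorphism. -/
noncomputable def phi : W →* Function.End (W × ZMod 2) :=
  cs.lift ⟨sig cs, sig_liftable cs⟩

lemma phi_wordProd (ω : List B) :
    phi cs (cs.wordProd ω) = (ω.map (sig cs)).prod := by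
  unfold CoxeterSystem.wordProd
  rw [MonoidHom.map_list_prod, List.map_map]
  congr 1
  apply List.map_congr_left
  intro b _
  simp [phi, Function.comp]

/-- Parity of the number of times `t` occurs in an inversion sequence. -/
noncomputable def Npar (w t : W) : ZMod 2 := (phi cs w (t, 0)).2

lemma count_parity (ω : List B) (t : W) :
    ((cs.rightInvSeq ω).count t : ZMod 2) = Npar cs (cs.wordProd ω) t := by
  unfold Npar
  rw [phi_wordProd, prod_sig_apply]
  simp

lemma phi_apply (w t : W) (ε : ZMod 2) :
    phi cs w (t, ε) = (w * t * w⁻¹, ε + Npar cs w t) := by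
  obtain ⟨ω, rfl⟩ := cs.wordProd_surjective w
  rw [phi_wordProd, prod_sig_apply, ← count_parity]

lemma ris_append (ω₁ ω₂ : List B) :
    cs.rightInvSeq (ω₁ ++ ω₂)
      = (cs.rightInvSeq ω₁).map (fun u => (cs.wordProd ω₂)⁻¹ * u * cs.wordProd ω₂)
        ++ cs.rightInvSeq ω₂ := by
  induction ω₁ with
  | nil => simp
  | cons i ω₁ ih =>
    rw [List.cons_append, ris_cons, ris_cons, ih]
    rw [List.map_cons, List.cons_append]
    congr 1
    rw [cs.wordProd_append, mul_inv_rev]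
    group

lemma lis_eq_map (ω : List B) :
    cs.leftInvSeq ω
      = (cs.rightInvSeq ω).map (fun u => cs.wordProd ω * u * (cs.wordProd ω)⁻¹) := by
  apply List.ext_getElem
  · simp
  · intro n h1 h2
    have hn : n < ω.length := by simpa using h1
    rw [List.getElem_map]
    have e1 : (cs.leftInvSeq ω)[n] = (cs.leftInvSeq ω).getD n 1 :=
      (List.getD_eq_getElem _ 1 h1).symm
    have hr : n < (cs.rightInvSeq ω).length := by simp [hn]
    have e2 : (cs.rightInvSeq ω)[n]'hr = (cs.rightInvSeq ω).getD n 1 :=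
      (List.getD_eq_getElem _ 1 hr).symm
    rw [e1, e2]
    have h3 := cs.getD_leftInvSeq_mul_wordProd ω n
    have h4 := cs.wordProd_mul_getD_rightInvSeq ω n
    rw [← h4] at h3
    calc (cs.leftInvSeq ω).getD n 1
        = (cs.leftInvSeq ω).getD n 1 * cs.wordProd ω * (cs.wordProd ω)⁻¹ := by group
      _ = cs.wordProd ω * (cs.rightInvSeq ω).getD n 1 * (cs.wordProd ω)⁻¹ := by rw [h3]

lemma count_map_conj (l : List W) (a b t : W) :
    (l.map (fun u => a * u * b)).count t = l.count (a⁻¹ * t * b⁻¹) := by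
  have hinj : Function.Injective (fun u : W => a * u * b) := by
    intro x y h
    simp only at h
    have := mul_right_cancel h
    exact mul_left_cancel this
  have := List.count_map_of_injective l (fun u : W => a * u * b) hinj (a⁻¹ * t * b⁻¹)
  rw [← this]
  congr 1
  group

lemma Npar_refl {t : W} (ht : cs.IsReflection t) : Npar cs t t = 1 := by
  obtain ⟨v, k, rfl⟩ := ht
  obtain ⟨β, rfl⟩ := cs.wordProd_surjective v
  have hπ : cs.wordProd (β ++ k :: β.reverse)
      = cs.wordProd β * cs.simple k * (cs.wordProd β)⁻¹ := by
    rw [cs.wordProd_append, cs.wordProd_cons, cs.wordProd_reverse, mul_assoc]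
  have hcp := count_parity cs (β ++ k :: β.reverse)
      (cs.wordProd β * cs.simple k * (cs.wordProd β)⁻¹)
  rw [hπ] at hcp
  rw [← hcp]
  rw [ris_append cs β (k :: β.reverse), List.count_append, ris_cons]
  have hπ2 : cs.wordProd (k :: β.reverse) = cs.simple k * (cs.wordProd β)⁻¹ := by
    rw [cs.wordProd_cons, cs.wordProd_reverse]
  have hhead : (cs.wordProd β.reverse)⁻¹ * cs.simple k * cs.wordProd β.reverse
      = cs.wordProd β * cs.simple k * (cs.wordProd β)⁻¹ := by
    rw [cs.wordProd_reverse, inv_inv]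
  rw [hπ2, hhead, List.count_cons, if_pos (by simp)]
  have hsq : cs.simple k * cs.simple k = 1 := cs.simple_mul_simple_self k
  have hc1 : ((cs.rightInvSeq β).map
      (fun u => (cs.simple k * (cs.wordProd β)⁻¹)⁻¹ * u * (cs.simple k * (cs.wordProd β)⁻¹))).count
        (cs.wordProd β * cs.simple k * (cs.wordProd β)⁻¹)
      = (cs.rightInvSeq β).count (cs.simple k) := by
    rw [count_map_conj]
    congr 1
    rw [inv_inv, mul_inv_rev, inv_inv, cs.inv_simple]
    calc (cs.simple k * (cs.wordProd β)⁻¹)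
          * (cs.wordProd β * cs.simple k * (cs.wordProd β)⁻¹)
          * (cs.wordProd β * cs.simple k)
        = cs.simple k * cs.simple k * cs.simple k := by group
      _ = cs.simple k := by rw [hsq, one_mul]
  have hc2 : (cs.rightInvSeq β.reverse).count
        (cs.wordProd β * cs.simple k * (cs.wordProd β)⁻¹)
      = (cs.rightInvSeq β).count (cs.simple k) := by
    rw [cs.rightInvSeq_reverse, List.count_reverse, lis_eq_map, count_map_conj]
    congr 1
    group
  rw [hc1, hc2]
  push_cast
  have hx : ∀ x : ZMod 2, x + (x + 1) = 1 := by decide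
  exact hx _

lemma Npar_mul_reflection (w : W) {t : W} (ht : cs.IsReflection t) :
    Npar cs (w * t) t = Npar cs w t + 1 := by
  have h1 : phi cs (w * t) (t, 0) = phi cs w (phi cs t (t, 0)) := by
    rw [map_mul]
    rfl
  have h2 : phi cs t (t, 0) = (t, 1) := by
    rw [phi_apply, Npar_refl cs ht]
    have htt : t * t * t⁻¹ = t := by group
    rw [htt, zero_add]
  unfold Npar
  rw [h1, h2, phi_apply, phi_apply]
  show (1 : ZMod 2) + Npar cs w t = 0 + Npar cs w t + 1
  ring

lemma Npar_eq_one_of_isRightInversion {w t : W} (h : cs.IsRightInversion w t) :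
    Npar cs w t = 1 := by
  by_contra h0
  have hzero : Npar cs w t = 0 := by
    have : ∀ x : ZMod 2, x ≠ 1 → x = 0 := by decide
    exact this _ h0
  have hone : Npar cs (w * t) t = 1 := by
    rw [Npar_mul_reflection cs w h.1, hzero, zero_add]
  obtain ⟨ω, hred, hw⟩ := cs.exists_reduced_word' (w * t)
  have hcount : ((cs.rightInvSeq ω).count t : ZMod 2) = 1 := by
    rw [count_parity, ← hw, hone]
  have hmem : t ∈ cs.rightInvSeq ω := by
    rw [← List.count_pos_iff]
    rcases Nat.eq_zero_or_pos ((cs.rightInvSeq ω).count t) with hz | hp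
    · exfalso; rw [hz] at hcount; simp at hcount
    · exact hp
  have hinv := cs.isRightInversion_of_mem_rightInvSeq hred hmem
  rw [← hw] at hinv
  have : cs.length (w * t * t) < cs.length (w * t) := hinv.2
  rw [mul_assoc, h.1.mul_self, mul_one] at this
  have hlt := h.2
  omega

lemma strong_exchange (ω : List B) {t : W}
    (h : cs.IsRightInversion (cs.wordProd ω) t) :
    ∃ k, ∃ _ : k < ω.length, cs.wordProd ω * t = cs.wordProd (ω.eraseIdx k) := by
  have hN : Npar cs (cs.wordProd ω) t = 1 := Npar_eq_one_of_isRightInversion cs h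
  have hcount : ((cs.rightInvSeq ω).count t : ZMod 2) = 1 := by
    rw [count_parity, hN]
  have hmem : t ∈ cs.rightInvSeq ω := by
    rw [← List.count_pos_iff]
    rcases Nat.eq_zero_or_pos ((cs.rightInvSeq ω).count t) with hz | hp
    · exfalso; rw [hz] at hcount; simp at hcount
    · exact hp
  obtain ⟨k, hk, hkt⟩ := List.mem_iff_getElem.mp hmem
  have hk' : k < ω.length := by simpa using hk
  refine ⟨k, hk', ?_⟩
  have : (cs.rightInvSeq ω).getD k 1 = t := by
    rw [List.getD_eq_getElem _ 1 hk, hkt]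
  rw [← this, cs.wordProd_mul_getD_rightInvSeq]

/-! ### Parabolic subgroups and minimal coset representatives -/

variable {I : Set B}

lemma word_mem_parab {α : List B} (hα : ∀ b ∈ α, b ∈ I) :
    cs.wordProd α ∈ parab cs I := by
  induction α with
  | nil => rw [cs.wordProd_nil]; exact Subgroup.one_mem _
  | cons b α ih =>
    rw [cs.wordProd_cons]
    refine Subgroup.mul_mem _ ?_ (ih (fun x hx => hα x (List.mem_cons_of_mem b hx)))
    exact Subgroup.subset_closure ⟨b, hα b List.mem_cons_self, rfl⟩

lemma exists_word_parab {a : W} (ha : a ∈ parab cs I) :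
    ∃ α : List B, (∀ b ∈ α, b ∈ I) ∧ cs.wordProd α = a := by
  induction ha using Subgroup.closure_induction with
  | mem x hx =>
    obtain ⟨b, hb, rfl⟩ := hx
    exact ⟨[b], by simpa using hb, cs.wordProd_singleton b⟩
  | one => exact ⟨[], by simp, cs.wordProd_nil⟩
  | mul x y hx hy ihx ihy =>
    obtain ⟨α, hα, rfl⟩ := ihx
    obtain ⟨α', hα', rfl⟩ := ihy
    exact ⟨α ++ α', by
      intro b hb
      rcases List.mem_append.mp hb with h | h
      · exact hα b h
      · exact hα' b h, cs.wordProd_append α α'⟩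
  | inv x hx ihx =>
    obtain ⟨α, hα, rfl⟩ := ihx
    exact ⟨α.reverse, fun b hb => hα b (List.mem_reverse.mp hb), cs.wordProd_reverse α⟩

lemma minLenQ_le {u : W} {x : W ⧸ parab cs I} (hu : (QuotientGroup.mk u : W ⧸ parab cs I) = x) :
    minLenQ cs I x ≤ cs.length u :=
  Nat.sInf_le ⟨u, hu, rfl⟩

lemma exists_minLenQ (x : W ⧸ parab cs I) :
    ∃ u : W, (QuotientGroup.mk u : W ⧸ parab cs I) = x ∧ cs.length u = minLenQ cs I x := by
  obtain ⟨w, rfl⟩ := QuotientGroup.mk_surjective x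
  have hne : (cs.length '' {u : W | (QuotientGroup.mk u : W ⧸ parab cs I) = QuotientGroup.mk w}).Nonempty :=
    ⟨cs.length w, w, rfl, rfl⟩
  obtain ⟨u, hu, hlen⟩ := Nat.sInf_mem hne
  exact ⟨u, hu, hlen⟩

lemma mk_mul_parab (w : W) {a : W} (ha : a ∈ parab cs I) :
    (QuotientGroup.mk (w * a) : W ⧸ parab cs I) = QuotientGroup.mk w := by
  symm
  rw [QuotientGroup.eq]
  simpa using ha

/-- Any `w` admits a reduced word of the form `η ++ α`, where `α` is a word in `I` and
`η` has length equal to the minimal length in the coset `w W_I`. -/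
lemma decomp (I : Set B) (w : W) :
    ∃ η α : List B, (∀ b ∈ α, b ∈ I) ∧ cs.IsReduced (η ++ α) ∧ cs.wordProd (η ++ α) = w ∧
      η.length = minLenQ cs I (QuotientGroup.mk w) := by
  obtain ⟨u, hu_mk, hu_len⟩ := exists_minLenQ cs (QuotientGroup.mk w : W ⧸ parab cs I)
  have hmem : u⁻¹ * w ∈ parab cs I := QuotientGroup.eq.mp hu_mk
  obtain ⟨α₀, hα₀, hπα₀⟩ := exists_word_parab cs hmem
  have hw : u * cs.wordProd α₀ = w := by rw [hπα₀]; group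
  have claim : ∀ α₀ : List B, (∀ b ∈ α₀, b ∈ I) →
      ∃ η α : List B, (∀ b ∈ α, b ∈ I) ∧ cs.IsReduced (η ++ α) ∧
        cs.wordProd (η ++ α) = u * cs.wordProd α₀ ∧
        η.length = minLenQ cs I (QuotientGroup.mk w) := by
    intro α₀
    induction α₀ using List.reverseRecOn with
    | nil =>
      intro _
      obtain ⟨η, hηlen, hηw⟩ := cs.exists_reduced_word u
      refine ⟨η, [], by simp, ?_, ?_, ?_⟩
      · rw [List.append_nil]
        show cs.length (cs.wordProd η) = η.length
        exact hηlen
      · rw [List.append_nil, ← hηw, cs.wordProd_nil, mul_one]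
      · rw [← hηlen.eq, ← hηw]
        exact hu_len
    | append_singleton α₀ r ihα =>
      intro hmemα
      have hmem₀ : ∀ b ∈ α₀, b ∈ I := fun b hb => hmemα b (by simp [hb])
      have hrI : r ∈ I := hmemα r (by simp)
      obtain ⟨η, α, hαI, hred, hπ, hlen⟩ := ihα hmem₀
      have hπr : cs.wordProd (α₀ ++ [r]) = cs.wordProd α₀ * cs.simple r := by
        rw [cs.wordProd_append, cs.wordProd_singleton]
      have hcoset : (QuotientGroup.mk (u * cs.wordProd (α₀ ++ [r])) : W ⧸ parab cs I)
          = QuotientGroup.mk w := by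
        rw [mk_mul_parab cs u (word_mem_parab cs (by
          intro b hb
          rcases List.mem_append.mp hb with h | h
          · exact hmem₀ b h
          · simpa using (by rw [List.mem_singleton.mp h]; exact hrI))), hu_mk]
      rcases cs.length_mul_simple (cs.wordProd (η ++ α)) r with hup | hdown
      · refine ⟨η, α ++ [r], ?_, ?_, ?_, hlen⟩
        · intro b hb
          rcases List.mem_append.mp hb with h | h
          · exact hαI b h
          · rw [List.mem_singleton.mp h]; exact hrI
        · show cs.length (cs.wordProd (η ++ (α ++ [r]))) = (η ++ (α ++ [r])).length
          rw [← List.append_assoc, cs.wordProd_append, cs.wordProd_singleton, hup]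
          have hr2 : cs.length (cs.wordProd (η ++ α)) = (η ++ α).length := hred
          simp only [hr2, List.length_append, List.length_singleton]
        · rw [← List.append_assoc, cs.wordProd_append, cs.wordProd_singleton, hπ, hπr,
            mul_assoc]
      · -- descent case: use strong exchange
        have hti : cs.IsRightInversion (cs.wordProd (η ++ α)) (cs.simple r) :=
          ⟨cs.isReflection_simple r, by omega⟩
        obtain ⟨k, hk, heq⟩ := strong_exchange cs (η ++ α) hti
        have h5 : u * cs.wordProd (α₀ ++ [r]) = cs.wordProd (η ++ α) * cs.simple r := by
          rw [hπr, ← mul_assoc, ← hπ]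
        by_cases hkη : k < η.length
        · exfalso
          rw [List.eraseIdx_append_of_lt_length hkη] at heq
          have hz : cs.wordProd (η.eraseIdx k)
              = (u * cs.wordProd (α₀ ++ [r])) * (cs.wordProd α)⁻¹ := by
            rw [h5, heq, cs.wordProd_append]
            group
          have hm : minLenQ cs I (QuotientGroup.mk w) ≤ cs.length (cs.wordProd (η.eraseIdx k)) := by
            apply minLenQ_le
            rw [hz]
            calc (QuotientGroup.mk ((u * cs.wordProd (α₀ ++ [r])) * (cs.wordProd α)⁻¹)
                    : W ⧸ parab cs I)
                = QuotientGroup.mk (u * cs.wordProd (α₀ ++ [r])) :=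
                  mk_mul_parab cs _ (Subgroup.inv_mem _ (word_mem_parab cs hαI))
              _ = QuotientGroup.mk w := hcoset
          have hlb : cs.length (cs.wordProd (η.eraseIdx k)) ≤ η.length - 1 := by
            calc cs.length (cs.wordProd (η.eraseIdx k)) ≤ (η.eraseIdx k).length :=
                  cs.length_wordProd_le _
              _ = η.length - 1 := by rw [List.length_eraseIdx, if_pos hkη]
          omega
        · push_neg at hkη
          rw [List.eraseIdx_append_of_length_le hkη] at heq
          have hk2 : k < η.length + α.length := by
            have := hk
            rwa [List.length_append] at this
          have hkα : k - η.length < α.length := by omega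
          refine ⟨η, α.eraseIdx (k - η.length), ?_, ?_, ?_, hlen⟩
          · intro b hb
            exact hαI b ((List.eraseIdx_sublist α (k - η.length)).subset hb)
          · show cs.length (cs.wordProd (η ++ α.eraseIdx (k - η.length)))
                = (η ++ α.eraseIdx (k - η.length)).length
            rw [← heq]
            have hlen2 : (η ++ α.eraseIdx (k - η.length)).length = η.length + α.length - 1 := by
              rw [List.length_append, List.length_eraseIdx, if_pos hkα]
              omega
            have hr2 : cs.length (cs.wordProd (η ++ α)) = (η ++ α).length := hred
            rw [List.length_append] at hr2
            rw [hlen2]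
            omega
          · rw [← heq, hπ, hπr, mul_assoc]
  obtain ⟨η, α, h1, h2, h3, h4⟩ := claim α₀ hα₀
  exact ⟨η, α, h1, h2, by rw [h3, hw], h4⟩

/-- If `t` is a reflection with `ℓ(tw) < ℓ(w)`, then the minimal length in the coset
`twW_I` is at most the minimal length in `wW_I`. -/
lemma lemA (I : Set B) {t : W} (ht : cs.IsReflection t) (w : W)
    (hlt : cs.length (t * w) < cs.length w) :
    minLenQ cs I (QuotientGroup.mk (t * w)) ≤ minLenQ cs I (QuotientGroup.mk w) := by
  obtain ⟨η, α, hαI, hred, hπ, hlen⟩ := decomp cs I w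
  have hinv : cs.IsRightInversion (cs.wordProd ((η ++ α).reverse)) t := by
    refine ⟨ht, ?_⟩
    rw [cs.wordProd_reverse, hπ]
    have h1 : w⁻¹ * t = (t * w)⁻¹ := by rw [mul_inv_rev, ht.inv]
    rw [h1, cs.length_inv, cs.length_inv]
    exact hlt
  obtain ⟨k, hk, heq⟩ := strong_exchange cs ((η ++ α).reverse) hinv
  rw [cs.wordProd_reverse, hπ] at heq
  have htw : t * w = (cs.wordProd (((η ++ α).reverse).eraseIdx k))⁻¹ := by
    rw [← heq, mul_inv_rev, inv_inv, ht.inv]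
  have hrev : (η ++ α).reverse = α.reverse ++ η.reverse := List.reverse_append
  rw [hrev] at htw
  have hk' : k < α.length + η.length := by
    rw [hrev] at hk
    simpa using hk
  -- `mk w = mk (π η)`
  have hwη : (QuotientGroup.mk w : W ⧸ parab cs I) = QuotientGroup.mk (cs.wordProd η) := by
    rw [← hπ, cs.wordProd_append]
    exact mk_mul_parab cs _ (word_mem_parab cs hαI)
  by_cases hkα : k < α.reverse.length
  · -- the deleted letter lies in `α`: the coset is unchanged
    rw [List.eraseIdx_append_of_lt_length hkα] at htw
    have htw2 : t * w = cs.wordProd (η ++ (α.reverse.eraseIdx k).reverse) := by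
      rw [htw, ← cs.wordProd_reverse]
      congr 1
      rw [List.reverse_append, List.reverse_reverse]
    have hmemI : ∀ b ∈ (α.reverse.eraseIdx k).reverse, b ∈ I := by
      intro b hb
      have := (List.eraseIdx_sublist α.reverse k).subset (List.mem_reverse.mp hb)
      exact hαI b (List.mem_reverse.mp this)
    have h2 : (QuotientGroup.mk (t * w) : W ⧸ parab cs I)
        = QuotientGroup.mk (cs.wordProd η) := by
      rw [htw2, cs.wordProd_append]
      exact mk_mul_parab cs _ (word_mem_parab cs hmemI)
    rw [h2, hwη]
  · -- the deleted letter lies in `η`: the minimal length strictly drops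
    push_neg at hkα
    rw [List.eraseIdx_append_of_length_le hkα] at htw
    set d := k - α.reverse.length with hd
    have hdη : d < η.length := by
      rw [hd]
      simp only [List.length_reverse] at hkα ⊢
      omega
    have htw2 : t * w = cs.wordProd ((η.reverse.eraseIdx d).reverse ++ α) := by
      rw [htw, ← cs.wordProd_reverse]
      congr 1
      rw [List.reverse_append, List.reverse_reverse]
    have h2 : (QuotientGroup.mk (t * w) : W ⧸ parab cs I)
        = QuotientGroup.mk (cs.wordProd ((η.reverse.eraseIdx d).reverse)) := by
      rw [htw2, cs.wordProd_append]
      exact mk_mul_parab cs _ (word_mem_parab cs hαI)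
    have h3 : minLenQ cs I (QuotientGroup.mk (t * w))
        ≤ cs.length (cs.wordProd ((η.reverse.eraseIdx d).reverse)) :=
      minLenQ_le cs h2.symm
    have h4 : cs.length (cs.wordProd ((η.reverse.eraseIdx d).reverse))
        ≤ η.length - 1 := by
      calc cs.length (cs.wordProd ((η.reverse.eraseIdx d).reverse))
          ≤ ((η.reverse.eraseIdx d).reverse).length := cs.length_wordProd_le _
        _ = η.length - 1 := by
            rw [List.length_reverse, List.length_eraseIdx,
              if_pos (by simpa using hdη), List.length_reverse]
    omega

end CoxHelperSE

/-- For a reflection `t`, with `L_i, R_i, F_i` the sets of cosets `wW_{I_i}` on which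
`ℓ((tw)^{I_i})` is respectively greater than, less than, or equal to `ℓ(w^{I_i})`, no edge
`(wW_{I_1}, …, wW_{I_r})` of the `(I₁,…,I_r; W, S)`-hypergraph contains both a vertex in some
`L_i` and a vertex in some `R_j`; i.e. `F = ⋃ i, F_i` is a vertex cut separating
`L = ⋃ i, L_i` from `R = ⋃ i, R_i`. -/
theorem no_edge_meets_both_sides (cs : CoxeterSystem M W) (r : ℕ) (Is : Fin r → Set B)
    (t : W) (ht : cs.IsReflection t) (w : W) (i j : Fin r) :
    ¬(minLenQ cs (Is i) (QuotientGroup.mk (t * w)) > minLenQ cs (Is i) (QuotientGroup.mk w) ∧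
      minLenQ cs (Is j) (QuotientGroup.mk (t * w)) < minLenQ cs (Is j) (QuotientGroup.mk w)) := by
  rintro ⟨hi, hj⟩
  have hne := ht.length_mul_right_ne w
  rcases Nat.lt_or_ge (cs.length (t * w)) (cs.length w) with hlt | hge
  · have := CoxHelperSE.lemA cs (Is i) ht w hlt
    omega
  · have hgt : cs.length w < cs.length (t * w) := by omega
    have h2 : cs.length (t * (t * w)) < cs.length (t * w) := by
      rw [← mul_assoc, ht.mul_self, one_mul]
      exact hgt
    have h3 := CoxHelperSE.lemA cs (Is j) ht (t * w) h2
    rw [← mul_assoc, ht.mul_self, one_mul] at h3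
    omega
end

section
/- Let (W, S) be a finite Coxeter system and I ⊆ S. Then there exists a percolating sequence of W/W_I starting from the singleton {W_I}: a finite sequence J_0 = {W_I}, J_1, …, J_N = W/W_I of subsets of W/W_I such that each J_{i+1} equals J_i⁺(t_i) or J_i⁻(t_i) for some reflection t_i. -/
variable {B W : Type*} [Group W] {M : CoxeterMatrix B}

/-- The left-folding map `t⁺` on `W`: `t⁺(w) = tw` if `ℓ(tw) < ℓ(w)`, else `w`. -/
noncomputable def foldWplus (cs : CoxeterSystem M W) (t w : W) : W :=
  if cs.length (t * w) < cs.length w then t * w else w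

/-- The right-folding map `t⁻` on `W`: `t⁻(w) = tw` if `ℓ(tw) > ℓ(w)`, else `w`. -/
noncomputable def foldWminus (cs : CoxeterSystem M W) (t w : W) : W :=
  if cs.length (t * w) > cs.length w then t * w else w

/-- The left-folding map on cosets. -/
noncomputable def foldQplus (cs : CoxeterSystem M W) (I : Set B) (t : W)
    (x : W ⧸ parab cs I) : W ⧸ parab cs I :=
  QuotientGroup.mk (foldWplus cs t x.out)

/-- The right-folding map on cosets. -/
noncomputable def foldQminus (cs : CoxeterSystem M W) (I : Set B) (t : W)
    (x : W ⧸ parab cs I) : W ⧸ parab cs I :=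
  QuotientGroup.mk (foldWminus cs t x.out)

/-- `J⁺(t)`. -/
noncomputable def Jplus (cs : CoxeterSystem M W) (I : Set B) (t : W)
    (J : Set (W ⧸ parab cs I)) : Set (W ⧸ parab cs I) :=
  {x | foldQplus cs I t x ∈ J}

/-- `J⁻(t)`. -/
noncomputable def Jminus (cs : CoxeterSystem M W) (I : Set B) (t : W)
    (J : Set (W ⧸ parab cs I)) : Set (W ⧸ parab cs I) :=
  {x | foldQminus cs I t x ∈ J}


namespace Perco

open CoxeterSystem List
open scoped Classical

variable {B W : Type*} [Group W] {M : CoxeterMatrix B} (cs : CoxeterSystem M W)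

section DihedralCalc

variable {G : Type*} [Group G] {a b : G}

lemma conj_eq_iff (u v x : G) : u * x * u⁻¹ = v ↔ x = u⁻¹ * v * u := by
  constructor
  · intro h; rw [← h]; group
  · intro h; rw [h]; group

lemma comm_pow (ha : a * a = 1) (hb : b * b = 1) (k : ℕ) :
    b * (a * b) ^ k = ((a * b) ^ k)⁻¹ * b := by
  have hpinv : (a * b)⁻¹ = b * a := by
    rw [mul_inv_rev, inv_eq_of_mul_eq_one_right ha, inv_eq_of_mul_eq_one_right hb]
  induction k with
  | zero => simp
  | succ k ih =>
    calc b * (a * b) ^ (k + 1) = (b * (a * b) ^ k) * (a * b) := by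
          rw [pow_succ, mul_assoc]
      _ = ((a * b) ^ k)⁻¹ * (b * (a * b)) := by rw [ih]; simp [mul_assoc]
      _ = ((a * b) ^ k)⁻¹ * ((a * b)⁻¹ * b) := by
          rw [hpinv]; simp [mul_assoc]
      _ = ((a * b) ^ (k + 1))⁻¹ * b := by
          rw [← mul_assoc, ← mul_inv_rev, ← pow_succ']

lemma conj_pow_b (ha : a * a = 1) (hb : b * b = 1) (k : ℕ) :
    ((a * b) ^ k)⁻¹ * b * (a * b) ^ k = b * (a * b) ^ (2 * k) := by
  rw [← comm_pow ha hb, mul_assoc, ← pow_add, two_mul]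

lemma conj_pow_bab (ha : a * a = 1) (hb : b * b = 1) (k : ℕ) :
    ((a * b) ^ k)⁻¹ * (b * a * b) * (a * b) ^ k = b * (a * b) ^ (2 * k + 1) := by
  have h1 : b * a * b = b * (a * b) := by rw [mul_assoc]
  calc ((a * b) ^ k)⁻¹ * (b * a * b) * (a * b) ^ k
      = (((a * b) ^ k)⁻¹ * b) * ((a * b) * (a * b) ^ k) := by
        rw [h1]; simp [mul_assoc]
    _ = (b * (a * b) ^ k) * ((a * b) * (a * b) ^ k) := by rw [← comm_pow ha hb]
    _ = b * (a * b) ^ (2 * k + 1) := by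
        rw [mul_assoc, ← pow_succ', ← pow_add, show k + (k + 1) = 2 * k + 1 from by omega]

end DihedralCalc

/-- The sign-flipping conjugation map used to build the reflection representation on
`W × ZMod 2`. -/
noncomputable def sig (a : W) : W × ZMod 2 → W × ZMod 2 :=
  fun x => (a * x.1 * a, x.2 + if x.1 = a then 1 else 0)

lemma sig_invol (a : W) (ha : a * a = 1) : Function.Involutive (sig a) := by
  intro x
  unfold sig
  have h1 : a * (a * x.1 * a) * a = x.1 := by
    have : a * (a * x.1 * a) * a = (a * a) * x.1 * (a * a) := by group
    rw [this, ha]; group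
  have h2 : (a * x.1 * a = a) ↔ (x.1 = a) := by
    constructor
    · intro h
      calc x.1 = a * (a * x.1 * a) * a := h1.symm
        _ = a * a * a := by rw [h]
        _ = a := by rw [ha, one_mul]
    · intro h; rw [h, ha, one_mul]
  ext
  · simpa using h1
  · simp only [h2]
    by_cases h : x.1 = a
    · simp only [h, if_pos]
      have : (1 + 1 : ZMod 2) = 0 := by decide
      rw [add_assoc, this, add_zero]
    · simp [h]

/-- The generators of the representation. -/
noncomputable def sigP (i : B) : Equiv.Perm (W × ZMod 2) :=
  Function.Involutive.toPerm (sig (cs.simple i)) (sig_invol _ (cs.simple_mul_simple_self i))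

lemma sigP_apply (i : B) (x : W × ZMod 2) : sigP cs i x = sig (cs.simple i) x := rfl

lemma sig_pow_apply (i j : B) (k : ℕ) (x : W × ZMod 2) :
    ((sigP cs i * sigP cs j) ^ k) x
      = ((cs.simple i * cs.simple j) ^ k * x.1 * ((cs.simple i * cs.simple j) ^ k)⁻¹,
        x.2 + ∑ r ∈ Finset.range (2 * k),
          if x.1 = cs.simple j * (cs.simple i * cs.simple j) ^ r then 1 else 0) := by
  have ha := cs.simple_mul_simple_self i
  have hb := cs.simple_mul_simple_self j
  induction k with
  | zero => simp
  | succ k ih =>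
    set p := cs.simple i * cs.simple j with hp
    rw [pow_succ', Equiv.Perm.mul_apply, ih, Equiv.Perm.mul_apply, sigP_apply, sigP_apply]
    unfold sig
    simp only
    set y := p ^ k * x.1 * (p ^ k)⁻¹ with hy
    have hcond1 : (y = cs.simple j) ↔ (x.1 = cs.simple j * p ^ (2 * k)) := by
      rw [hy, conj_eq_iff, conj_pow_b ha hb]
    have hcond2 : (cs.simple j * y * cs.simple j = cs.simple i)
        ↔ (x.1 = cs.simple j * p ^ (2 * k + 1)) := by
      have hj : (cs.simple j)⁻¹ = cs.simple j := cs.inv_simple j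
      have step : (cs.simple j * y * cs.simple j = cs.simple i)
          ↔ (y = cs.simple j * cs.simple i * cs.simple j) := by
        nth_rewrite 1 [show cs.simple j * y * cs.simple j
          = cs.simple j * y * (cs.simple j)⁻¹ by rw [hj]]
        rw [conj_eq_iff, hj]
      rw [step, hy, conj_eq_iff, conj_pow_bab ha hb]
    have hpinv : p⁻¹ = cs.simple j * cs.simple i := by
      rw [hp, mul_inv_rev, cs.inv_simple, cs.inv_simple]
    have coord1 : cs.simple i * (cs.simple j * y * cs.simple j) * cs.simple i
        = p ^ (k + 1) * x.1 * (p ^ (k + 1))⁻¹ := by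
      rw [pow_succ', mul_inv_rev, hpinv, hy, hp]
      simp [mul_assoc]
    refine Prod.ext coord1 ?_
    simp only [hcond1, hcond2]
    rw [show 2 * (k + 1) = (2 * k) + 1 + 1 by omega, Finset.sum_range_succ,
      Finset.sum_range_succ]
    ring

lemma sigP_liftable : M.IsLiftable (fun i => (sigP cs i : Equiv.Perm (W × ZMod 2))) := by
  intro i j
  ext x
  · rw [sig_pow_apply, cs.simple_mul_simple_pow i j]
    simp
  · rw [sig_pow_apply, cs.simple_mul_simple_pow i j]
    simp only
    rw [two_mul, Finset.sum_range_add]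
    have : ∀ r ∈ Finset.range (M i j),
        (if x.1 = cs.simple j * (cs.simple i * cs.simple j) ^ (M i j + r) then (1 : ZMod 2) else 0)
          = if x.1 = cs.simple j * (cs.simple i * cs.simple j) ^ r then 1 else 0 := by
      intro r _
      rw [pow_add, cs.simple_mul_simple_pow i j, one_mul]
    rw [Finset.sum_congr rfl this]
    set X := ∑ r ∈ Finset.range (M i j),
      if x.1 = cs.simple j * (cs.simple i * cs.simple j) ^ r then (1 : ZMod 2) else 0
    have : X + X = 0 := by
      rw [← two_mul]
      rw [show (2 : ZMod 2) = 0 by decide, zero_mul]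
    rw [this, add_zero]
    rfl

/-- The reflection representation of `W` on `W × ZMod 2`. -/
noncomputable def phi : W →* Equiv.Perm (W × ZMod 2) :=
  cs.lift ⟨fun i => sigP cs i, sigP_liftable cs⟩

lemma phi_simple (i : B) : phi cs (cs.simple i) = sigP cs i :=
  cs.lift_apply_simple (sigP_liftable cs) i

lemma phi_wordProd (ω : List B) (t : W) (ε : ZMod 2) :
    phi cs (cs.wordProd ω) (t, ε)
      = (cs.wordProd ω * t * (cs.wordProd ω)⁻¹,
        ε + (((cs.rightInvSeq ω).count t : ℕ) : ZMod 2)) := by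
  induction ω generalizing ε with
  | nil => simp
  | cons i ω ih =>
    rw [cs.wordProd_cons, map_mul, Equiv.Perm.mul_apply, ih, phi_simple, sigP_apply]
    unfold sig
    have hcond : (cs.wordProd ω * t * (cs.wordProd ω)⁻¹ = cs.simple i)
        ↔ (t = (cs.wordProd ω)⁻¹ * cs.simple i * cs.wordProd ω) := conj_eq_iff _ _ _
    have hris : cs.rightInvSeq (i :: ω)
        = ((cs.wordProd ω)⁻¹ * cs.simple i * cs.wordProd ω) :: cs.rightInvSeq ω := rfl
    refine Prod.ext ?_ ?_
    · simp only
      rw [mul_inv_rev, cs.inv_simple]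
      group
    · simp only [hcond, hris, List.count_cons, beq_iff_eq]
      push_cast
      rw [show ((cs.wordProd ω)⁻¹ * cs.simple i * cs.wordProd ω = t)
        = (t = (cs.wordProd ω)⁻¹ * cs.simple i * cs.wordProd ω) from propext eq_comm]
      ring

lemma count_ris_mod2_eq {ω ω' : List B} (h : cs.wordProd ω = cs.wordProd ω') (t : W) :
    (((cs.rightInvSeq ω).count t : ℕ) : ZMod 2) = ((cs.rightInvSeq ω').count t : ℕ) := by
  have h1 := phi_wordProd cs ω t 0
  have h2 := phi_wordProd cs ω' t 0
  rw [h] at h1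
  rw [h1] at h2
  have := congrArg Prod.snd h2
  simpa using this


lemma simple_mem_ris {ω : List B} (hω : cs.IsReduced ω) {i : B}
    (h : cs.length (cs.wordProd ω * cs.simple i) < cs.length (cs.wordProd ω)) :
    cs.simple i ∈ cs.rightInvSeq ω := by
  obtain ⟨ω', hred', hv⟩ := cs.exists_reduced_word' (cs.wordProd ω * cs.simple i)
  have hπ : cs.wordProd (ω'.concat i) = cs.wordProd ω := by
    rw [cs.wordProd_concat, ← hv, cs.simple_mul_simple_cancel_right]
  have hlen : cs.length (cs.wordProd ω * cs.simple i) + 1 = cs.length (cs.wordProd ω) := by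
    rcases cs.length_mul_simple (cs.wordProd ω) i with h1 | h1
    · omega
    · exact h1
  have hred₂ : cs.IsReduced (ω'.concat i) := by
    unfold CoxeterSystem.IsReduced at *
    rw [hπ, List.length_concat, ← hred', ← hv]
    omega
  have hmem : cs.simple i ∈ cs.rightInvSeq (ω'.concat i) := by
    rw [cs.rightInvSeq_concat]
    simp
  have hcount : (cs.rightInvSeq (ω'.concat i)).count (cs.simple i) = 1 :=
    List.count_eq_one_of_mem hred₂.nodup_rightInvSeq hmem
  have hmod := count_ris_mod2_eq cs hπ (cs.simple i)
  rw [hcount] at hmod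
  have hne : (cs.rightInvSeq ω).count (cs.simple i) ≠ 0 := by
    intro h0
    rw [h0] at hmod
    simp at hmod
  exact List.count_pos_iff.mp (Nat.pos_of_ne_zero hne)

lemma rightExchange {ω : List B} (hω : cs.IsReduced ω) {i : B}
    (h : cs.length (cs.wordProd ω * cs.simple i) < cs.length (cs.wordProd ω)) :
    ∃ j, j < ω.length ∧ cs.wordProd ω * cs.simple i = cs.wordProd (ω.eraseIdx j) := by
  obtain ⟨j, hj, hget⟩ := List.mem_iff_getElem.mp (simple_mem_ris cs hω h)
  rw [cs.length_rightInvSeq] at hj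
  refine ⟨j, hj, ?_⟩
  rw [← hget, ← List.getD_eq_getElem _ 1 (by rw [cs.length_rightInvSeq]; exact hj)]
  exact cs.wordProd_mul_getD_rightInvSeq ω j

lemma leftExchangeWord {w : W} {i : B} (h : cs.length (cs.simple i * w) < cs.length w)
    {ω : List B} (hred : cs.IsReduced ω) (hw : cs.wordProd ω = w) :
    ∃ ω₂ : List B, ω₂.length + 1 = ω.length ∧ (∀ j ∈ ω₂, j ∈ ω) ∧
      cs.wordProd ω₂ = cs.simple i * w := by
  have hrev : cs.IsReduced ω.reverse := (cs.isReduced_reverse_iff ω).mpr hred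
  have hrw : cs.wordProd ω.reverse = w⁻¹ := by rw [cs.wordProd_reverse, hw]
  have h' : cs.length (cs.wordProd ω.reverse * cs.simple i)
      < cs.length (cs.wordProd ω.reverse) := by
    rw [hrw, show w⁻¹ * cs.simple i = (cs.simple i * w)⁻¹ by
      rw [mul_inv_rev, cs.inv_simple], cs.length_inv, cs.length_inv]
    exact h
  obtain ⟨j, hj, heq⟩ := rightExchange cs hrev h'
  rw [List.length_reverse] at hj
  refine ⟨(ω.reverse.eraseIdx j).reverse, ?_, ?_, ?_⟩
  · rw [List.length_reverse,
      List.length_eraseIdx_add_one (by rw [List.length_reverse]; exact hj)]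
    exact List.length_reverse
  · intro x hx
    rw [List.mem_reverse] at hx
    exact List.mem_reverse.mp (List.mem_of_mem_eraseIdx hx)
  · rw [cs.wordProd_reverse, ← heq, hrw, mul_inv_rev, cs.inv_simple, inv_inv]

lemma wordProd_mem_parab {I : Set B} {ω : List B} (hω : ∀ j ∈ ω, j ∈ I) :
    cs.wordProd ω ∈ parab cs I := by
  induction ω with
  | nil =>
    rw [cs.wordProd_nil]
    exact one_mem _
  | cons i ω ih =>
    rw [cs.wordProd_cons]
    exact mul_mem (Subgroup.subset_closure ⟨i, hω i (by simp), rfl⟩)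
      (ih fun j hj => hω j (by simp [hj]))

lemma exists_word_of_mem_parab {I : Set B} {h : W} (hh : h ∈ parab cs I) :
    ∃ ω : List B, (∀ j ∈ ω, j ∈ I) ∧ cs.wordProd ω = h := by
  induction hh using Subgroup.closure_induction with
  | mem x hx =>
    obtain ⟨j, hj, rfl⟩ := hx
    exact ⟨[j], by simpa using hj, by simp⟩
  | one => exact ⟨[], by simp, by simp⟩
  | mul x y hx hy ihx ihy =>
    obtain ⟨ω₁, h₁, rfl⟩ := ihx
    obtain ⟨ω₂, h₂, rfl⟩ := ihy
    exact ⟨ω₁ ++ ω₂, by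
      intro j hj
      rcases List.mem_append.mp hj with h | h
      exacts [h₁ j h, h₂ j h], by rw [cs.wordProd_append]⟩
  | inv x hx ihx =>
    obtain ⟨ω₁, h₁, rfl⟩ := ihx
    exact ⟨ω₁.reverse, fun j hj => h₁ j (List.mem_reverse.mp hj), by
      rw [cs.wordProd_reverse]⟩

lemma exists_reduced_I_word (I : Set B) (ω : List B) (hω : ∀ j ∈ ω, j ∈ I) :
    ∃ ρ : List B, cs.IsReduced ρ ∧ (∀ j ∈ ρ, j ∈ I) ∧ cs.wordProd ρ = cs.wordProd ω := by
  induction ω with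
  | nil => exact ⟨[], by simp [CoxeterSystem.IsReduced], by simp, rfl⟩
  | cons i ω ih =>
    obtain ⟨ρ, hρred, hρI, hρπ⟩ := ih fun j hj => hω j (by simp [hj])
    have hiI : i ∈ I := hω i (by simp)
    rcases cs.length_simple_mul (cs.wordProd ρ) i with hup | hdown
    · refine ⟨i :: ρ, ?_, ?_, ?_⟩
      · unfold CoxeterSystem.IsReduced at *
        rw [cs.wordProd_cons, hup, hρred]
        simp
      · intro j hj
        rcases List.mem_cons.mp hj with h | h
        · rwa [h]
        · exact hρI j h
      · rw [cs.wordProd_cons, cs.wordProd_cons, hρπ]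
    · have hlt : cs.length (cs.simple i * cs.wordProd ρ) < cs.length (cs.wordProd ρ) := by
        omega
      obtain ⟨ω₂, hlen, hsub, hπ₂⟩ := leftExchangeWord cs hlt hρred rfl
      refine ⟨ω₂, ?_, fun j hj => hρI j (hsub j hj), ?_⟩
      · unfold CoxeterSystem.IsReduced at *
        rw [hπ₂]
        omega
      · rw [hπ₂, cs.wordProd_cons, hρπ]

variable (I : Set B)

/-- Minimal length of a representative of a coset. -/
noncomputable def lam (x : W ⧸ parab cs I) : ℕ :=
  sInf (cs.length '' {w : W | QuotientGroup.mk w = x})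

lemma mk_out_eq (x : W ⧸ parab cs I) : QuotientGroup.mk x.out = x :=
  Quotient.out_eq x

lemma lam_le {x : W ⧸ parab cs I} {w : W} (hw : QuotientGroup.mk w = x) :
    lam cs I x ≤ cs.length w :=
  Nat.sInf_le ⟨w, hw, rfl⟩

lemma exists_min_rep (x : W ⧸ parab cs I) :
    ∃ u : W, QuotientGroup.mk u = x ∧ cs.length u = lam cs I x := by
  have hne : (cs.length '' {w : W | QuotientGroup.mk w = x}).Nonempty :=
    ⟨cs.length x.out, ⟨x.out, mk_out_eq cs I x, rfl⟩⟩
  obtain ⟨u, hu, hlen⟩ := Nat.sInf_mem hne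
  exact ⟨u, hu, hlen⟩

lemma lam_mk_one : lam cs I (QuotientGroup.mk 1) = 0 :=
  Nat.le_zero.mp (by simpa using lam_le cs I (rfl : QuotientGroup.mk (1 : W) = _))

lemma eq_mk_one_of_lam_eq_zero {x : W ⧸ parab cs I} (h : lam cs I x = 0) :
    x = QuotientGroup.mk 1 := by
  obtain ⟨u, hu, hlen⟩ := exists_min_rep cs I x
  rw [h] at hlen
  rw [cs.length_eq_zero_iff.mp hlen] at hu
  exact hu.symm

lemma length_min_mul_parab {u : W}
    (hu : ∀ v : W, QuotientGroup.mk v = (QuotientGroup.mk u : W ⧸ parab cs I) →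
      cs.length u ≤ cs.length v)
    (ω : List B) (hI : ∀ j ∈ ω, j ∈ I) (hred : cs.IsReduced ω) :
    cs.length (u * cs.wordProd ω) = cs.length u + ω.length := by
  induction ω using List.reverseRecOn with
  | nil => simp
  | append_singleton ω j ih =>
    have hjI : j ∈ I := hI j (by simp)
    have hωI : ∀ l ∈ ω, l ∈ I := fun l hl => hI l (by simp [hl])
    have hππ : cs.wordProd (ω ++ [j]) = cs.wordProd ω * cs.simple j := by
      rw [cs.wordProd_append, cs.wordProd_singleton]
    have hredω : cs.IsReduced ω := by
      unfold CoxeterSystem.IsReduced at *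
      have h1 : cs.length (cs.wordProd ω * cs.simple j) = ω.length + 1 := by
        rw [← hππ, hred]; simp
      have h2 := cs.length_mul_simple (cs.wordProd ω) j
      have h3 := cs.length_wordProd_le ω
      omega
    have ihv := ih hωI hredω
    rw [hππ, ← mul_assoc, List.length_append, List.length_singleton]
    rcases cs.length_mul_simple (u * cs.wordProd ω) j with hgood | hbad
    · rw [hgood, ihv]
      omega
    · exfalso
      obtain ⟨ρ, hρlen, hρ⟩ : ∃ ρ : List B, ρ.length = cs.length u ∧ u = cs.wordProd ρ := by
        obtain ⟨ρ, h1, h2⟩ := cs.exists_reduced_word u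
        exact ⟨ρ, by rw [h2]; exact Eq.symm h1, h2⟩
      have hcat : cs.wordProd (ρ ++ ω) = u * cs.wordProd ω := by
        rw [cs.wordProd_append, ← hρ]
      have hcatred : cs.IsReduced (ρ ++ ω) := by
        unfold CoxeterSystem.IsReduced
        rw [hcat, ihv, List.length_append, hρlen]
      have hlt : cs.length (cs.wordProd (ρ ++ ω) * cs.simple j)
          < cs.length (cs.wordProd (ρ ++ ω)) := by
        rw [hcat]
        omega
      obtain ⟨k, hk, heq⟩ := rightExchange cs hcatred hlt
      rw [hcat] at heq
      by_cases hcase : k < ρ.length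
      · rw [List.eraseIdx_append_of_lt_length hcase] at heq
        set v := cs.wordProd (ρ.eraseIdx k) with hv
        rw [cs.wordProd_append, ← hv] at heq
        -- heq : u * π ω * s j = v * π ω
        have hg : cs.wordProd ω * cs.simple j * (cs.wordProd ω)⁻¹ ∈ parab cs I := by
          have : cs.wordProd (ω ++ [j] ++ ω.reverse)
              = cs.wordProd ω * cs.simple j * (cs.wordProd ω)⁻¹ := by
            rw [cs.wordProd_append, cs.wordProd_append, cs.wordProd_singleton,
              cs.wordProd_reverse]
          rw [← this]
          apply wordProd_mem_parab
          intro l hl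
          simp only [List.mem_append, List.mem_reverse, List.mem_singleton] at hl
          rcases hl with (h | h) | h
          · exact hωI l h
          · rwa [h]
          · exact hωI l h
        have hveq : v = u * (cs.wordProd ω * cs.simple j * (cs.wordProd ω)⁻¹) := by
          have : v * cs.wordProd ω = u * cs.wordProd ω * cs.simple j := heq.symm
          calc v = v * cs.wordProd ω * (cs.wordProd ω)⁻¹ := by group
            _ = u * cs.wordProd ω * cs.simple j * (cs.wordProd ω)⁻¹ := by rw [this]
            _ = u * (cs.wordProd ω * cs.simple j * (cs.wordProd ω)⁻¹) := by group
        have hmkv : QuotientGroup.mk v = (QuotientGroup.mk u : W ⧸ parab cs I) := by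
          rw [hveq]
          exact (QuotientGroup.mk_mul_of_mem u hg)
        have h1 := hu v hmkv
        have h2 : cs.length v ≤ (ρ.eraseIdx k).length := cs.length_wordProd_le _
        have h3 := List.length_eraseIdx_add_one hcase
        omega
      · push_neg at hcase
        rw [List.eraseIdx_append_of_length_le hcase, cs.wordProd_append, ← hρ] at heq
        have hcan : cs.wordProd ω * cs.simple j = cs.wordProd (ω.eraseIdx (k - ρ.length)) := by
          have := heq
          rw [mul_assoc] at this
          exact mul_left_cancel this
        have h1 : cs.length (cs.wordProd ω * cs.simple j) ≤ (ω.eraseIdx (k - ρ.length)).length :=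
          hcan ▸ cs.length_wordProd_le _
        have h2 : cs.length (cs.wordProd ω * cs.simple j) = ω.length + 1 := by
          rw [← hππ, hred]; simp
        have h3 := List.length_eraseIdx_le ω (k - ρ.length)
        omega

lemma dagger (i : B) (a : W) (h : cs.length (cs.simple i * a) < cs.length a) :
    lam cs I (QuotientGroup.mk (cs.simple i * a)) ≤ lam cs I (QuotientGroup.mk a) := by
  obtain ⟨u, humk, hulen⟩ := exists_min_rep cs I (QuotientGroup.mk a)
  have hpar : u⁻¹ * a ∈ parab cs I := (QuotientGroup.eq).mp humk
  obtain ⟨ω₀, hω₀I, hω₀π⟩ := exists_word_of_mem_parab cs hpar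
  obtain ⟨ωh, hhred, hhI, hhπ⟩ := exists_reduced_I_word cs I ω₀ hω₀I
  have hhπ' : cs.wordProd ωh = u⁻¹ * a := by rw [hhπ, hω₀π]
  have ha : a = u * cs.wordProd ωh := by rw [hhπ']; group
  have hmks : QuotientGroup.mk (cs.simple i * u)
      = (QuotientGroup.mk (cs.simple i * a) : W ⧸ parab cs I) := by
    rw [QuotientGroup.eq]
    have heq : (cs.simple i * u)⁻¹ * (cs.simple i * a) = u⁻¹ * a := by group
    rw [heq]; exact hpar
  rcases Nat.lt_or_ge (cs.length (cs.simple i * u)) (cs.length u) with hlt | hge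
  · have h1 := lam_le cs I hmks
    omega
  · have hne := cs.length_simple_mul_ne u i
    have hgt : cs.length (cs.simple i * u) = cs.length u + 1 := by
      rcases cs.length_simple_mul u i with h1 | h1 <;> omega
    by_cases hminsu : cs.length (cs.simple i * u)
        = lam cs I (QuotientGroup.mk (cs.simple i * u))
    · exfalso
      have hmin' : ∀ v : W, QuotientGroup.mk v
          = (QuotientGroup.mk (cs.simple i * u) : W ⧸ parab cs I) →
          cs.length (cs.simple i * u) ≤ cs.length v := by
        intro v hv
        have := lam_le cs I hv
        omega
      have hadd := length_min_mul_parab cs I hmin' ωh hhI hhred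
      have h1 : cs.simple i * u * cs.wordProd ωh = cs.simple i * a := by rw [ha]; group
      have h2 : cs.length a ≤ cs.length u + ωh.length := by
        rw [ha]
        calc cs.length (u * cs.wordProd ωh) ≤ cs.length u + cs.length (cs.wordProd ωh) :=
              cs.length_mul_le u (cs.wordProd ωh)
          _ ≤ cs.length u + ωh.length := by
              have := cs.length_wordProd_le ωh
              omega
      rw [h1] at hadd
      omega
    · have hlam_le : lam cs I (QuotientGroup.mk (cs.simple i * u))
          ≤ cs.length (cs.simple i * u) := lam_le cs I rfl
      rw [← hmks]
      omega

lemma rdagger (i : B) (a : W)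
    (h : lam cs I (QuotientGroup.mk (cs.simple i * a)) < lam cs I (QuotientGroup.mk a)) :
    cs.length (cs.simple i * a) < cs.length a := by
  by_contra hcon
  push_neg at hcon
  have hne := cs.length_simple_mul_ne a i
  have hgt : cs.length a < cs.length (cs.simple i * a) := lt_of_le_of_ne hcon (Ne.symm hne)
  have h2 : cs.length (cs.simple i * (cs.simple i * a)) < cs.length (cs.simple i * a) := by
    rw [cs.simple_mul_simple_cancel_left]
    exact hgt
  have h3 := dagger cs I i (cs.simple i * a) h2
  rw [cs.simple_mul_simple_cancel_left] at h3
  omega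

lemma lam_foldQplus_le (i : B) (x : W ⧸ parab cs I) :
    lam cs I (foldQplus cs I (cs.simple i) x) ≤ lam cs I x := by
  unfold foldQplus foldWplus
  split_ifs with hc
  · have := dagger cs I i x.out hc
    rwa [mk_out_eq cs I x] at this
  · rw [mk_out_eq cs I x]

lemma exists_fold_progress (x : W ⧸ parab cs I) (hx : lam cs I x ≠ 0) :
    ∃ i : B, lam cs I (foldQplus cs I (cs.simple i) x) < lam cs I x := by
  obtain ⟨u, humk, hulen⟩ := exists_min_rep cs I x
  have hune : u ≠ 1 := by
    intro h1
    rw [h1] at hulen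
    simp at hulen
    exact hx hulen.symm
  obtain ⟨i, hi⟩ := cs.exists_leftDescent_of_ne_one hune
  have hdesc : cs.length (cs.simple i * u) < cs.length u := hi
  refine ⟨i, ?_⟩
  have hpar : u⁻¹ * x.out ∈ parab cs I :=
    (QuotientGroup.eq).mp (humk.trans (mk_out_eq cs I x).symm)
  have hmk : QuotientGroup.mk (cs.simple i * u)
      = (QuotientGroup.mk (cs.simple i * x.out) : W ⧸ parab cs I) := by
    rw [QuotientGroup.eq]
    have heq : (cs.simple i * u)⁻¹ * (cs.simple i * x.out) = u⁻¹ * x.out := by group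
    rw [heq]; exact hpar
  have hlamlt : lam cs I (QuotientGroup.mk (cs.simple i * x.out)) < lam cs I x := by
    rw [← hmk]
    have := lam_le cs I (rfl : QuotientGroup.mk (cs.simple i * u) = _)
    omega
  have hout : cs.length (cs.simple i * x.out) < cs.length x.out := by
    apply rdagger cs I
    rw [mk_out_eq cs I x]
    exact hlamlt
  unfold foldQplus foldWplus
  rw [if_pos hout]
  exact hlamlt

end Perco

/-- Iterated folding. -/
noncomputable def foldSeq (cs : CoxeterSystem M W) (I : Set B) :
    List W → (W ⧸ parab cs I) → (W ⧸ parab cs I)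
  | [], x => x
  | t :: L, x => foldSeq cs I L (foldQplus cs I t x)

lemma foldSeq_nil (cs : CoxeterSystem M W) (I : Set B) (x : W ⧸ parab cs I) :
    foldSeq cs I [] x = x := rfl

lemma foldSeq_cons (cs : CoxeterSystem M W) (I : Set B) (t : W) (L : List W)
    (x : W ⧸ parab cs I) :
    foldSeq cs I (t :: L) x = foldSeq cs I L (foldQplus cs I t x) := rfl

namespace Perco

lemma reach (cs : CoxeterSystem M W) (I : Set B) [Fintype (W ⧸ parab cs I)] :
    ∀ (n : ℕ) (g : (W ⧸ parab cs I) → (W ⧸ parab cs I)),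
      (∑ x : W ⧸ parab cs I, lam cs I (g x)) ≤ n →
      ∃ L : List W, (∀ t ∈ L, cs.IsReflection t) ∧
        ∀ x, foldSeq cs I L (g x) = QuotientGroup.mk 1 := by
  intro n
  induction n with
  | zero =>
    intro g hg
    refine ⟨[], by simp, fun x => ?_⟩
    have h0 : lam cs I (g x) = 0 :=
      Finset.sum_eq_zero_iff.mp (Nat.le_zero.mp hg) x (Finset.mem_univ x)
    rw [foldSeq_nil]
    exact eq_mk_one_of_lam_eq_zero cs I h0
  | succ n ih =>
    intro g hg
    by_cases hall : ∀ x, g x = QuotientGroup.mk 1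
    · exact ⟨[], by simp, fun x => by rw [foldSeq_nil]; exact hall x⟩
    · push_neg at hall
      obtain ⟨x₀, hx₀⟩ := hall
      have hlam0 : lam cs I (g x₀) ≠ 0 := fun h0 => hx₀ (eq_mk_one_of_lam_eq_zero cs I h0)
      obtain ⟨i, hi⟩ := exists_fold_progress cs I (g x₀) hlam0
      have hsum : (∑ x : W ⧸ parab cs I, lam cs I (foldQplus cs I (cs.simple i) (g x)))
          < ∑ x : W ⧸ parab cs I, lam cs I (g x) :=
        Finset.sum_lt_sum (fun x _ => lam_foldQplus_le cs I i (g x))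
          ⟨x₀, Finset.mem_univ x₀, hi⟩
      obtain ⟨L, hLrefl, hL⟩ := ih (fun x => foldQplus cs I (cs.simple i) (g x))
        (Nat.lt_succ_iff.mp (lt_of_lt_of_le hsum hg))
      refine ⟨cs.simple i :: L, ?_, fun x => ?_⟩
      · intro t ht
        rcases List.mem_cons.mp ht with h | h
        · rw [h]; exact cs.isReflection_simple i
        · exact hLrefl t h
      · rw [foldSeq_cons]
        exact hL x

end Perco


/-- There is a percolating sequence of `W/W_I` starting from the singleton `{W_I}`:
a finite folding sequence `J₀ = {W_I}, J₁, …, J_N = W/W_I`, where each `J_{i+1}` is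
`J_i⁺(t_i)` or `J_i⁻(t_i)` for some reflection `t_i`. -/
theorem exists_percolating_sequence [Finite W] (cs : CoxeterSystem M W) (I : Set B) :
    ∃ (N : ℕ) (Js : ℕ → Set (W ⧸ parab cs I)),
      Js 0 = {(QuotientGroup.mk 1 : W ⧸ parab cs I)} ∧ Js N = Set.univ ∧
      ∀ i < N, ∃ t : W, cs.IsReflection t ∧
        (Js (i + 1) = Jplus cs I t (Js i) ∨ Js (i + 1) = Jminus cs I t (Js i)) := by
  classical
  letI : Fintype (W ⧸ parab cs I) := Fintype.ofFinite _
  obtain ⟨L, hLrefl, hL⟩ :=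
    Perco.reach cs I (∑ x : W ⧸ parab cs I, Perco.lam cs I x) id (le_refl _)
  refine ⟨L.length,
    fun n => {x | foldSeq cs I (L.drop (L.length - n)) x = QuotientGroup.mk 1}, ?_, ?_, ?_⟩
  · ext x
    simp only [Nat.sub_zero, List.drop_length, Set.mem_setOf_eq, Set.mem_singleton_iff,
      foldSeq_nil]
  · simp only [Nat.sub_self, List.drop_zero]
    exact Set.eq_univ_iff_forall.mpr fun x => hL x
  · intro i hi
    have hn : L.length - i - 1 < L.length := by omega
    refine ⟨L[L.length - i - 1]'hn, hLrefl _ (List.getElem_mem hn), Or.inl ?_⟩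
    have hdrop : L.drop (L.length - (i + 1))
        = L[L.length - i - 1]'hn :: L.drop (L.length - i) := by
      have h1 : L.length - (i + 1) = L.length - i - 1 := by omega
      rw [h1, List.drop_eq_getElem_cons hn,
        show L.length - i - 1 + 1 = L.length - i from by omega]
    ext x
    show foldSeq cs I (L.drop (L.length - (i + 1))) x = QuotientGroup.mk 1 ↔ _
    rw [hdrop, foldSeq_cons]
    exact Iff.rfl
end

section
/- Let (W, S) be a Coxeter system, I ⊆ S with |I| ≤ |S| − 2, and let s, s' be two distinct simple reflections not in I. Let t be a reflection whose reduced expressions contain s'. Then for every w ∈ W_{I ∪ {s}}, we have ℓ((tw)^I) > ℓ(w^I); that is, every coset wW_I with w ∈ W_{I∪{s}} lies on the strictly increasing side of the reflection t. -/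
open List

namespace SXAux

open scoped Classical

variable {B W : Type*} [Group W] {M : CoxeterMatrix B} (cs : CoxeterSystem M W)

/-- auxiliary involution on `W × ℤˣ`. -/
noncomputable def eta (i : B) : W × ℤˣ → W × ℤˣ :=
  fun x => (cs.simple i * x.1 * cs.simple i, (if x.1 = cs.simple i then (-1 : ℤˣ) else 1) * x.2)

lemma conj_eq_iff (a b x y : W) : a * x * b = y ↔ x = a⁻¹ * y * b⁻¹ := by
  constructor
  · rintro rfl; group
  · rintro rfl; group

lemma eta_invol (i : B) : Function.Involutive (eta cs i) := by
  rintro ⟨t, e⟩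
  have hcond : (cs.simple i * t * cs.simple i = cs.simple i) ↔ t = cs.simple i := by
    rw [conj_eq_iff, cs.inv_simple]
    simp [cs.simple_mul_simple_self, cs.simple_mul_simple_cancel_left]
  simp only [eta, hcond]
  refine Prod.ext ?_ ?_
  · simp [← mul_assoc, cs.simple_mul_simple_self]
  · by_cases hc : t = cs.simple i <;> simp [hc, ← mul_assoc]

/-- the permutation of `W × ℤˣ` associated to a simple reflection. -/
noncomputable def pim (i : B) : Equiv.Perm (W × ℤˣ) := Function.Involutive.toPerm _ (eta_invol cs i)

lemma pim_apply (i : B) (x : W × ℤˣ) : pim cs i x = eta cs i x := rfl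


lemma pim_mul_pow_apply (i i' : B) (n : ℕ) :
    ∀ t : W, ∀ e : ℤˣ,
    ((pim cs i * pim cs i') ^ n) (t, e) =
      ((cs.simple i * cs.simple i') ^ n * t * (cs.simple i' * cs.simple i) ^ n,
        (∏ k ∈ Finset.range (2 * n),
          (if t = (cs.simple i' * cs.simple i) ^ k * cs.simple i' then (-1 : ℤˣ) else 1)) * e) := by
  induction n with
  | zero => intro t e; simp
  | succ n ih =>
    intro t e
    rw [pow_succ, Equiv.Perm.mul_apply]
    have hx : ((pim cs i * pim cs i') : Equiv.Perm (W × ℤˣ)) (t, e) =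
        ((cs.simple i * cs.simple i') * t * (cs.simple i' * cs.simple i),
          ((if t = (cs.simple i' * cs.simple i) ^ 1 * cs.simple i' then (-1 : ℤˣ) else 1) *
            ((if t = (cs.simple i' * cs.simple i) ^ 0 * cs.simple i' then (-1 : ℤˣ) else 1) * e))) := by
      rw [Equiv.Perm.mul_apply]
      simp only [pim_apply, eta]
      refine Prod.ext ?_ ?_
      · simp [mul_assoc]
      · simp only [pow_one, pow_zero, one_mul]
        have h1 : (cs.simple i' * t * cs.simple i' = cs.simple i) ↔
            (t = cs.simple i' * cs.simple i * cs.simple i') := by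
          rw [conj_eq_iff, cs.inv_simple]
        rw [h1]
    rw [hx, ih]
    refine Prod.ext ?_ ?_
    · show _ * (_ * t * _) * _ = _
      rw [pow_succ (cs.simple i * cs.simple i'), pow_succ' (cs.simple i' * cs.simple i)]
      simp [mul_assoc]
    · show (_ * _ : ℤˣ) = _
      have hiff : ∀ k : ℕ,
          ((cs.simple i * cs.simple i') * t * (cs.simple i' * cs.simple i)
            = (cs.simple i' * cs.simple i) ^ k * cs.simple i')
          ↔ (t = (cs.simple i' * cs.simple i) ^ (k + 1 + 1) * cs.simple i') := by
        intro k
        have ha : (cs.simple i * cs.simple i')⁻¹ = cs.simple i' * cs.simple i := by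
          simp [mul_inv_rev, cs.inv_simple]
        have hval : (cs.simple i * cs.simple i')⁻¹ *
            ((cs.simple i' * cs.simple i) ^ k * cs.simple i') *
            (cs.simple i' * cs.simple i)⁻¹
            = (cs.simple i' * cs.simple i) ^ (k + 1 + 1) * cs.simple i' := by
          rw [ha]
          rw [show (cs.simple i' * cs.simple i)⁻¹ = cs.simple i * cs.simple i' by
            simp [mul_inv_rev, cs.inv_simple]]
          calc (cs.simple i' * cs.simple i) *
                ((cs.simple i' * cs.simple i) ^ k * cs.simple i') *
                (cs.simple i * cs.simple i')
              = ((cs.simple i' * cs.simple i) * (cs.simple i' * cs.simple i) ^ k) *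
                (cs.simple i' * (cs.simple i * cs.simple i')) := by
                simp only [mul_assoc]
            _ = (cs.simple i' * cs.simple i) ^ (k + 1) *
                ((cs.simple i' * cs.simple i) * cs.simple i') := by
                rw [← pow_succ']; simp only [mul_assoc]
            _ = ((cs.simple i' * cs.simple i) ^ (k + 1) * (cs.simple i' * cs.simple i)) *
                cs.simple i' := by simp only [mul_assoc]
            _ = (cs.simple i' * cs.simple i) ^ (k + 1 + 1) * cs.simple i' := by rw [← pow_succ]
        rw [conj_eq_iff, hval]
      have hprod : (∏ k ∈ Finset.range (2 * n),
          (if (cs.simple i * cs.simple i') * t * (cs.simple i' * cs.simple i)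
            = (cs.simple i' * cs.simple i) ^ k * cs.simple i' then (-1 : ℤˣ) else 1))
          = ∏ k ∈ Finset.range (2 * n),
          (if t = (cs.simple i' * cs.simple i) ^ (k + 1 + 1) * cs.simple i' then (-1 : ℤˣ) else 1) :=
        Finset.prod_congr rfl fun k _ => if_congr (hiff k) rfl rfl
      rw [hprod]
      have h2 : 2 * (n + 1) = (2 * n + 1) + 1 := by ring
      rw [h2, Finset.prod_range_succ', Finset.prod_range_succ']
      simp only [zero_add]
      simp only [mul_assoc]


lemma pim_liftable : M.IsLiftable (fun i => pim cs i) := by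
  intro i i'
  apply Equiv.ext
  rintro ⟨t, e⟩
  have h1 : (cs.simple i * cs.simple i') ^ M i i' = 1 := cs.simple_mul_simple_pow i i'
  have h2 : (cs.simple i' * cs.simple i) ^ M i i' = 1 := cs.simple_mul_simple_pow' i i'
  have hsgn : (∏ k ∈ Finset.range (2 * M i i'),
      (if t = (cs.simple i' * cs.simple i) ^ k * cs.simple i' then (-1 : ℤˣ) else 1)) = 1 := by
    rw [two_mul, Finset.prod_range_add]
    have : ∀ k ∈ Finset.range (M i i'),
        (if t = (cs.simple i' * cs.simple i) ^ (M i i' + k) * cs.simple i' then (-1 : ℤˣ) else 1)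
        = (if t = (cs.simple i' * cs.simple i) ^ k * cs.simple i' then (-1 : ℤˣ) else 1) := by
      intro k _
      rw [pow_add, h2, one_mul]
    rw [Finset.prod_congr rfl this, Int.units_mul_self]
  show ((pim cs i * pim cs i') ^ M i i') (t, e) = _
  rw [pim_mul_pow_apply cs i i' (M i i') t e, h1, hsgn]
  simp

/-- The sign representation of the Coxeter group on `W × ℤˣ`. -/
noncomputable def rep : W →* Equiv.Perm (W × ℤˣ) := cs.lift ⟨fun i => pim cs i, pim_liftable cs⟩

lemma rep_simple (i : B) : rep cs (cs.simple i) = pim cs i :=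
  cs.lift_apply_simple (pim_liftable cs) i


lemma count_cons'' {α : Type*} [DecidableEq α] (a b : α) (l : List α) :
    (b :: l).count a = (if a = b then 1 else 0) + l.count a := by
  by_cases h : a = b <;> simp [List.count_cons, h, Nat.add_comm] <;> exact Ne.symm h

lemma rep_wordProd (ω : List B) : ∀ (t : W) (e : ℤˣ),
    rep cs (cs.wordProd ω) (t, e) =
      (cs.wordProd ω * t * (cs.wordProd ω)⁻¹,
        (-1 : ℤˣ) ^ ((cs.rightInvSeq ω).count t) * e) := by
  induction ω with
  | nil => intro t e; simp
  | cons i ω ih =>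
    intro t e
    rw [cs.wordProd_cons, map_mul, Equiv.Perm.mul_apply, ih t e, rep_simple, pim_apply]
    have hcond : (cs.wordProd ω * t * (cs.wordProd ω)⁻¹ = cs.simple i) ↔
        (t = (cs.wordProd ω)⁻¹ * cs.simple i * cs.wordProd ω) := by
      rw [conj_eq_iff]
      simp
    have hcount : ((cs.rightInvSeq (i :: ω)).count t)
        = (if t = (cs.wordProd ω)⁻¹ * cs.simple i * cs.wordProd ω then 1 else 0)
          + (cs.rightInvSeq ω).count t := by
      show ((((cs.wordProd ω)⁻¹ * cs.simple i * cs.wordProd ω) :: cs.rightInvSeq ω).count t) = _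
      rw [count_cons'']
    rw [hcount]
    simp only [eta, hcond]
    refine Prod.ext ?_ ?_
    · show cs.simple i * (cs.wordProd ω * t * (cs.wordProd ω)⁻¹) * cs.simple i = _
      simp [mul_assoc, mul_inv_rev, cs.inv_simple]
    · show (_ * _ : ℤˣ) = _
      rw [pow_add]
      by_cases hc : t = (cs.wordProd ω)⁻¹ * cs.simple i * cs.wordProd ω <;>
        simp [hc, mul_assoc]


lemma neg_one_pow_eq_iff (a b : ℕ) :
    ((-1 : ℤˣ) ^ a = (-1 : ℤˣ) ^ b) ↔ (Odd a ↔ Odd b) := by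
  have hne : (-1 : ℤˣ) ≠ 1 := by decide
  rcases Nat.even_or_odd a with ha | ha <;> rcases Nat.even_or_odd b with hb | hb
  · simp [ha.neg_one_pow, hb.neg_one_pow, Nat.not_odd_iff_even.mpr ha, Nat.not_odd_iff_even.mpr hb]
  · simp [ha.neg_one_pow, hb.neg_one_pow, Nat.not_odd_iff_even.mpr ha, hb, hne]
  · simp [ha.neg_one_pow, hb.neg_one_pow, Nat.not_odd_iff_even.mpr hb, ha, hne.symm]
  · simp [ha.neg_one_pow, hb.neg_one_pow, ha, hb]

lemma odd_count_invariant {ω₁ ω₂ : List B} (h : cs.wordProd ω₁ = cs.wordProd ω₂) (t : W) :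
    Odd ((cs.rightInvSeq ω₁).count t) ↔ Odd ((cs.rightInvSeq ω₂).count t) := by
  have h1 := rep_wordProd cs ω₁ t 1
  have h2 := rep_wordProd cs ω₂ t 1
  rw [h] at h1
  have := h1.symm.trans h2
  have hsnd := congrArg Prod.snd this
  simp only [mul_one] at hsnd
  exact (neg_one_pow_eq_iff _ _).mp hsnd

lemma count_rightInvSeq_append (τ : List B) (t : W) :
    ∀ σ : List B, ((cs.rightInvSeq (σ ++ τ)).count t)
      = (cs.rightInvSeq σ).count (cs.wordProd τ * t * (cs.wordProd τ)⁻¹)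
        + (cs.rightInvSeq τ).count t := by
  intro σ
  induction σ with
  | nil => simp
  | cons i σ ih =>
    show ((((cs.wordProd (σ ++ τ))⁻¹ * cs.simple i * cs.wordProd (σ ++ τ)) ::
        cs.rightInvSeq (σ ++ τ)).count t) = ((((cs.wordProd σ)⁻¹ * cs.simple i * cs.wordProd σ) ::
        cs.rightInvSeq σ).count (cs.wordProd τ * t * (cs.wordProd τ)⁻¹)) + _
    rw [count_cons'', count_cons'', ih]
    have hcond : (t = (cs.wordProd (σ ++ τ))⁻¹ * cs.simple i * cs.wordProd (σ ++ τ))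
        ↔ (cs.wordProd τ * t * (cs.wordProd τ)⁻¹ = (cs.wordProd σ)⁻¹ * cs.simple i * cs.wordProd σ) := by
      rw [conj_eq_iff (cs.wordProd τ) (cs.wordProd τ)⁻¹ t]
      rw [cs.wordProd_append]
      constructor <;> intro hh <;> rw [hh] <;> simp [mul_assoc]
    rw [if_congr hcond rfl rfl]
    omega


lemma odd_count_palindrome (i : B) : ∀ υ : List B,
    Odd ((cs.rightInvSeq (υ ++ [i] ++ υ.reverse)).count
      (cs.wordProd υ * cs.simple i * (cs.wordProd υ)⁻¹)) := by
  intro υ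
  induction υ with
  | nil =>
    simp only [List.nil_append, List.reverse_nil, List.append_nil, cs.wordProd_nil,
      one_mul, inv_one, mul_one]
    rw [cs.rightInvSeq_singleton]
    simp [List.count_singleton]
  | cons b υ ih =>
    set t' := cs.wordProd υ * cs.simple i * (cs.wordProd υ)⁻¹ with ht'def
    have ht'inv : t'⁻¹ = t' := by
      rw [ht'def]
      simp [mul_inv_rev, cs.inv_simple, mul_assoc]
    set σ := υ ++ [i] ++ υ.reverse with hσdef
    have hπσ : cs.wordProd σ = t' := by
      rw [hσdef, cs.wordProd_append, cs.wordProd_append, cs.wordProd_reverse,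
        cs.wordProd_singleton, ht'def, mul_assoc]
    have hπσb : cs.wordProd (σ ++ [b]) = t' * cs.simple b := by
      rw [cs.wordProd_append, hπσ, cs.wordProd_singleton]
    have hlist : (b :: υ) ++ [i] ++ (b :: υ).reverse = b :: (σ ++ [b]) := by
      simp [hσdef]
    have ht : cs.wordProd (b :: υ) * cs.simple i * (cs.wordProd (b :: υ))⁻¹
        = cs.simple b * (t' * cs.simple b) := by
      rw [cs.wordProd_cons, ht'def]
      simp [mul_inv_rev, cs.inv_simple, mul_assoc]
    rw [hlist, ht]
    show Odd ((((cs.wordProd (σ ++ [b]))⁻¹ * cs.simple b * cs.wordProd (σ ++ [b])) ::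
        cs.rightInvSeq (σ ++ [b])).count (cs.simple b * (t' * cs.simple b)))
    rw [count_cons'', count_rightInvSeq_append cs [b] _ σ]
    have hconj : cs.wordProd [b] * (cs.simple b * (t' * cs.simple b)) * (cs.wordProd [b])⁻¹
        = t' := by
      rw [cs.wordProd_singleton]
      simp only [cs.inv_simple, ← mul_assoc, cs.simple_mul_simple_cancel_right]
      simp only [mul_assoc, cs.simple_mul_simple_cancel_left]
    rw [hconj]
    have hc1 : (cs.simple b * (t' * cs.simple b)
        = (cs.wordProd (σ ++ [b]))⁻¹ * cs.simple b * cs.wordProd (σ ++ [b]))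
        ↔ t' = cs.simple b := by
      rw [hπσb]
      have hrhs : (t' * cs.simple b)⁻¹ * cs.simple b * (t' * cs.simple b)
          = cs.simple b * (t' * (cs.simple b * (t' * cs.simple b))) := by
        simp [mul_inv_rev, cs.inv_simple, ht'inv, mul_assoc]
      rw [hrhs, mul_right_inj, mul_right_inj, left_eq_mul, mul_eq_one_iff_eq_inv,
        cs.inv_simple]
    have hc2 : ((cs.rightInvSeq [b]).count (cs.simple b * (t' * cs.simple b)))
        = if t' = cs.simple b then 1 else 0 := by
      rw [cs.rightInvSeq_singleton]
      have : (cs.simple b * (t' * cs.simple b) = cs.simple b) ↔ t' = cs.simple b := by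
        rw [mul_eq_left, mul_eq_one_iff_eq_inv, cs.inv_simple]
      rw [List.count_singleton', if_congr (eq_comm.trans this) rfl rfl]
    rw [if_congr hc1 rfl rfl, hc2]
    obtain ⟨m, hm⟩ := ih
    rw [hm]
    refine ⟨(if t' = cs.simple b then 1 else 0) + m, ?_⟩
    by_cases hx : t' = cs.simple b <;> simp [hx] <;> omega


lemma isRightInversion_of_odd_count {ω : List B} {t : W}
    (h : Odd ((cs.rightInvSeq ω).count t)) : cs.IsRightInversion (cs.wordProd ω) t := by
  obtain ⟨σ, hσred, hσ⟩ := cs.exists_reduced_word' (cs.wordProd ω)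
  have h2 : Odd ((cs.rightInvSeq σ).count t) := (odd_count_invariant cs hσ t).mp h
  have hmem : t ∈ cs.rightInvSeq σ := by
    by_contra hm
    rw [List.count_eq_zero_of_not_mem hm] at h2
    simp at h2
  have := cs.isRightInversion_of_mem_rightInvSeq hσred hmem
  rwa [← hσ] at this

lemma odd_count_of_isRightInversion {ω : List B} {t : W} (ht : cs.IsReflection t)
    (h : cs.length (cs.wordProd ω * t) < cs.length (cs.wordProd ω)) :
    Odd ((cs.rightInvSeq ω).count t) := by
  by_contra heven
  obtain ⟨u, k, htuk⟩ := ht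
  obtain ⟨υ, hυ⟩ := cs.wordProd_surjective u
  have hτ : cs.wordProd (υ ++ [k] ++ υ.reverse) = t := by
    rw [cs.wordProd_append, cs.wordProd_append, cs.wordProd_reverse, cs.wordProd_singleton,
      htuk, hυ, mul_assoc]
  have hoddτ : Odd ((cs.rightInvSeq (υ ++ [k] ++ υ.reverse)).count t) := by
    have h0 := odd_count_palindrome cs k υ
    rwa [hυ, ← htuk] at h0
  have hcnt := count_rightInvSeq_append cs (υ ++ [k] ++ υ.reverse) t ω
  rw [hτ] at hcnt
  have htinv : t⁻¹ = t := CoxeterSystem.IsReflection.inv ⟨u, k, htuk⟩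
  have htt : t * t * t⁻¹ = t := by
    rw [htinv, mul_assoc, CoxeterSystem.IsReflection.mul_self ⟨u, k, htuk⟩, mul_one]
  rw [htt] at hcnt
  have hodd2 : Odd ((cs.rightInvSeq (ω ++ (υ ++ [k] ++ υ.reverse))).count t) := by
    rw [hcnt]
    exact (Nat.not_odd_iff_even.mp heven).add_odd hoddτ
  have hinv := isRightInversion_of_odd_count cs hodd2
  rw [cs.wordProd_append, hτ] at hinv
  have h2 := hinv.2
  rw [mul_assoc, CoxeterSystem.IsReflection.mul_self ⟨u, k, htuk⟩, mul_one] at h2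
  omega

lemma exists_reduced_sublist (ω : List B) :
    ∃ σ : List B, σ.Sublist ω ∧ cs.IsReduced σ ∧ cs.wordProd σ = cs.wordProd ω := by
  induction ω using List.reverseRecOn with
  | nil => exact ⟨[], List.Sublist.refl _, by simp [CoxeterSystem.IsReduced], rfl⟩
  | append_singleton ω k ih =>
    obtain ⟨σ, hsub, hred, hprod⟩ := ih
    by_cases h : cs.IsReduced (σ ++ [k])
    · exact ⟨σ ++ [k], List.Sublist.append hsub (List.Sublist.refl [k]), h, by
        rw [cs.wordProd_append, cs.wordProd_append, hprod]⟩
    · have hne := cs.length_mul_simple_ne (cs.wordProd σ) k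
      have hlen : cs.length (cs.wordProd σ * cs.simple k) = cs.length (cs.wordProd σ) - 1 := by
        rcases cs.length_mul_simple (cs.wordProd σ) k with hh | hh
        · exfalso
          apply h
          show cs.length (cs.wordProd (σ ++ [k])) = (σ ++ [k]).length
          rw [cs.wordProd_append, cs.wordProd_singleton, hh]
          rw [CoxeterSystem.IsReduced] at hred
          simp [hred]
        · omega
      have hlt : cs.length (cs.wordProd σ * cs.simple k) < cs.length (cs.wordProd σ) := by
        omega
      have hodd := odd_count_of_isRightInversion cs (cs.isReflection_simple k) hlt
      have hmem : cs.simple k ∈ cs.rightInvSeq σ := by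
        by_contra hm
        rw [List.count_eq_zero_of_not_mem hm] at hodd
        simp at hodd
      obtain ⟨m, hm, hget⟩ := List.mem_iff_getElem.mp hmem
      have hm' : m < σ.length := by
        have := cs.length_rightInvSeq σ
        omega
      have hgetD : (cs.rightInvSeq σ).getD m 1 = cs.simple k := by
        rw [List.getD_eq_getElem _ _ hm, hget]
      have heq : cs.wordProd σ * cs.simple k = cs.wordProd (σ.eraseIdx m) := by
        rw [← hgetD, cs.wordProd_mul_getD_rightInvSeq]
      have hlenerase := List.length_eraseIdx_add_one hm'
      refine ⟨σ.eraseIdx m, ?_, ?_, ?_⟩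
      · exact ((σ.eraseIdx_sublist m).trans hsub).trans (List.sublist_append_left ω [k])
      · show cs.length (cs.wordProd (σ.eraseIdx m)) = (σ.eraseIdx m).length
        rw [← heq, hlen]
        rw [CoxeterSystem.IsReduced] at hred
        omega
      · rw [← heq, hprod, cs.wordProd_append, cs.wordProd_singleton]


lemma exists_word_subset {A : Set B} {y : W} (hy : y ∈ Subgroup.closure (cs.simple '' A)) :
    ∃ ω : List B, (∀ b ∈ ω, b ∈ A) ∧ cs.wordProd ω = y := by
  induction hy using Subgroup.closure_induction with
  | mem x hx =>
    obtain ⟨b, hb, rfl⟩ := hx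
    exact ⟨[b], by simpa using hb, cs.wordProd_singleton b⟩
  | one => exact ⟨[], by simp, cs.wordProd_nil⟩
  | mul x y hx hy ihx ihy =>
    obtain ⟨ω₁, h1, hp1⟩ := ihx
    obtain ⟨ω₂, h2, hp2⟩ := ihy
    refine ⟨ω₁ ++ ω₂, ?_, by rw [cs.wordProd_append, hp1, hp2]⟩
    intro b hb
    rcases List.mem_append.mp hb with hb | hb
    · exact h1 b hb
    · exact h2 b hb
  | inv x hx ihx =>
    obtain ⟨ω, h1, hp⟩ := ihx
    refine ⟨ω.reverse, ?_, by rw [cs.wordProd_reverse, hp]⟩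
    intro b hb
    exact h1 b (List.mem_reverse.mp hb)

lemma length_lt_length_mul_reflection {A : Set B} {j : B} (hjA : j ∉ A) {t : W}
    (ht : cs.IsReflection t)
    (htj : ∀ ω : List B, cs.IsReduced ω → cs.wordProd ω = t → j ∈ ω)
    {y : W} (hy : y ∈ Subgroup.closure (cs.simple '' A)) :
    cs.length y < cs.length (y * t) := by
  obtain ⟨ω, hωA, hωy⟩ := exists_word_subset cs hy
  subst hωy
  rcases Nat.lt_or_ge (cs.length (cs.wordProd ω * t)) (cs.length (cs.wordProd ω)) with hlt | hge
  · exfalso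
    have hodd := odd_count_of_isRightInversion cs ht hlt
    have hmem : t ∈ cs.rightInvSeq ω := by
      by_contra hm
      rw [List.count_eq_zero_of_not_mem hm] at hodd
      simp at hodd
    obtain ⟨m, hm, hget⟩ := List.mem_iff_getElem.mp hmem
    have hm' : m < ω.length := by
      have := cs.length_rightInvSeq ω
      omega
    have hgetD : (cs.rightInvSeq ω).getD m 1 = t := by
      rw [List.getD_eq_getElem _ _ hm, hget]
    have htword : cs.wordProd ((ω.drop (m+1)).reverse ++ ([ω[m]] ++ ω.drop (m+1))) = t := by
      rw [cs.wordProd_append, cs.wordProd_append, cs.wordProd_reverse, cs.wordProd_singleton,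
        ← hgetD, cs.getD_rightInvSeq]
      rw [List.getElem?_eq_getElem hm']
      simp [mul_assoc]
    obtain ⟨σ, hσsub, hσred, hσprod⟩ := exists_reduced_sublist cs _
    have hj := htj σ hσred (hσprod.trans htword)
    have hjword := hσsub.subset hj
    have hjA' : j ∈ A := by
      rcases List.mem_append.mp hjword with hh | hh
      · exact hωA j (List.mem_of_mem_drop (List.mem_reverse.mp hh))
      · rcases List.mem_append.mp hh with hh | hh
        · rw [List.mem_singleton] at hh
          subst hh
          exact hωA _ (List.getElem_mem hm')
        · exact hωA j (List.mem_of_mem_drop hh)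
    exact hjA hjA'
  · have hne := CoxeterSystem.IsReflection.length_mul_left_ne ht (cs.wordProd ω)
    omega

end SXAux


variable {B W : Type*} [Group W] {M : CoxeterMatrix B}

/-- Let `s = s_i, s' = s_j` be distinct simple reflections not in `I` (so `|I| ≤ |S| - 2`),
and let `t` be a reflection all of whose reduced expressions contain `s'`. Then for every
`w ∈ W_{I ∪ {s}}` we have `ℓ((tw)^I) > ℓ(w^I)`: every coset `wW_I` with `w ∈ W_{I∪{s}}`
lies on the strictly increasing side of `t`. -/
theorem parabolic_on_left_side (cs : CoxeterSystem M W) (I : Set B) (i j : B)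
    (hij : i ≠ j) (hiI : i ∉ I) (hjI : j ∉ I) (t : W) (ht : cs.IsReflection t)
    (htj : ∀ ω : List B, cs.IsReduced ω → cs.wordProd ω = t → j ∈ ω)
    (w : W) (hw : w ∈ parab cs (I ∪ {i})) :
    minLenQ cs I (QuotientGroup.mk (t * w)) > minLenQ cs I (QuotientGroup.mk w) := by
  have hjK : j ∉ (I ∪ {i} : Set B) := by
    rintro (h | h)
    · exact hjI h
    · exact hij (Set.mem_singleton_iff.mp h).symm
  have key : ∀ v : W, v ∈ parab cs (I ∪ {i}) → cs.length v < cs.length (t * v) := by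
    intro v hv
    have hv' : v⁻¹ ∈ Subgroup.closure (cs.simple '' (I ∪ {i})) := inv_mem hv
    have h1 := SXAux.length_lt_length_mul_reflection cs hjK ht htj hv'
    have h2 : cs.length (t * v) = cs.length (v⁻¹ * t) := by
      rw [← cs.length_inv (t * v), mul_inv_rev, CoxeterSystem.IsReflection.inv ht]
    rw [h2, ← cs.length_inv v]
    exact h1
  have hne2 : (cs.length ''
      {u : W | (QuotientGroup.mk u : W ⧸ parab cs I) = QuotientGroup.mk (t * w)}).Nonempty :=
    ⟨cs.length (t * w), ⟨t * w, rfl, rfl⟩⟩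
  show sInf _ > sInf _
  obtain ⟨x, hx, hxlen⟩ := Nat.sInf_mem hne2
  have hx' : (QuotientGroup.mk x : W ⧸ parab cs I) = QuotientGroup.mk (t * w) := hx
  have hmemI : x⁻¹ * (t * w) ∈ parab cs I := QuotientGroup.eq.mp hx'
  have htx_mk : (QuotientGroup.mk (t * x) : W ⧸ parab cs I) = QuotientGroup.mk w := by
    rw [QuotientGroup.eq]
    have heq : (t * x)⁻¹ * w = x⁻¹ * (t⁻¹ * w) := by group
    rw [heq, CoxeterSystem.IsReflection.inv ht]
    exact hmemI
  have htx_mem : t * x ∈ parab cs (I ∪ {i}) := by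
    have hsub : parab cs I ≤ parab cs (I ∪ {i}) :=
      Subgroup.closure_mono (Set.image_mono Set.subset_union_left)
    have h3 : (t * x)⁻¹ * w ∈ parab cs I := QuotientGroup.eq.mp htx_mk
    have h4 : w⁻¹ * (t * x) ∈ parab cs I := by
      have h5 := inv_mem h3
      rwa [mul_inv_rev, inv_inv] at h5
    have h6 : t * x = w * (w⁻¹ * (t * x)) := by group
    rw [h6]
    exact mul_mem hw (hsub h4)
  have hlx : cs.length (t * x) < cs.length x := by
    have h7 := key (t * x) htx_mem
    rwa [← mul_assoc, CoxeterSystem.IsReflection.mul_self ht, one_mul] at h7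
  have hge : sInf (cs.length ''
      {u : W | (QuotientGroup.mk u : W ⧸ parab cs I) = QuotientGroup.mk w}) ≤ cs.length (t * x) :=
    Nat.sInf_le ⟨t * x, htx_mk, rfl⟩
  omega
end

section
/- Let (W, S) be a Coxeter system, I ⊆ S, and t a reflection. Define L_t^I = {wW_I : ℓ((tw)^I) > ℓ(w^I)}, R_t^I and F_t^I analogously with < and =. Then the coset left-folding map t⁺(wW_I) := t⁺(w)W_I is well defined and satisfies: t⁺(wW_I) = twW_I if wW_I ∈ R_t^I, and t⁺(wW_I) = wW_I if wW_I ∈ L_t^I ∪ F_t^I. -/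
variable {B W : Type*} [Group W] {M : CoxeterMatrix B}

/-- The left-folding map `t⁺` on `W`: `t⁺(w) = tw` if `ℓ(tw) < ℓ(w)`, else `w`. -/
noncomputable def foldW (cs : CoxeterSystem M W) (t w : W) : W :=
  if cs.length (t * w) < cs.length w then t * w else w

/-- The left-folding map on cosets, defined via an arbitrary representative. -/
noncomputable def foldQ (cs : CoxeterSystem M W) (I : Set B) (t : W)
    (x : W ⧸ parab cs I) : W ⧸ parab cs I :=
  QuotientGroup.mk (foldW cs t x.out)

open CoxeterSystem List Function

open scoped Classical

namespace CosetFoldAux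

variable (cs : CoxeterSystem M W)

/-- indicator in `ZMod 2` -/
noncomputable def chi (x y : W) : ZMod 2 := if x = y then 1 else 0

lemma conj_iff (x y v : W) : v * x * v⁻¹ = y ↔ x = v⁻¹ * y * v := by
  constructor <;> intro h
  · rw [← h]; group
  · rw [h]; group

/-- The basic permutation of `W × ZMod 2` attached to a simple reflection. -/
noncomputable def sig (i : B) : Equiv.Perm (W × ZMod 2) :=
  Involutive.toPerm
    (fun p => (cs.simple i * p.1 * cs.simple i, p.2 + chi p.1 (cs.simple i)))
    (by
      rintro ⟨t, e⟩
      simp only [Prod.mk.injEq]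
      constructor
      · simp [mul_assoc, cs.simple_mul_simple_self, cs.simple_mul_simple_cancel_left]
      · have hcancel : ∀ x : W, cs.simple i * (cs.simple i * x * cs.simple i) * cs.simple i
            = x := by
          intro x
          rw [show cs.simple i * (cs.simple i * x * cs.simple i) * cs.simple i
              = (cs.simple i * cs.simple i) * x * (cs.simple i * cs.simple i) from by group,
            cs.simple_mul_simple_self, one_mul, mul_one]
        have hcond : (cs.simple i * t * cs.simple i = cs.simple i) ↔ (t = cs.simple i) := by
          constructor <;> intro h
          · have h2 := congrArg
              (fun x => cs.simple i * x * cs.simple i) h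
            rw [hcancel t] at h2
            rw [h2, show cs.simple i * cs.simple i * cs.simple i = cs.simple i from by
              rw [cs.simple_mul_simple_self, one_mul]]
          · rw [h, show cs.simple i * cs.simple i * cs.simple i = cs.simple i from by
              rw [cs.simple_mul_simple_self, one_mul]]
        simp only [chi]
        rw [if_congr hcond rfl rfl]
        generalize (if t = cs.simple i then (1 : ZMod 2) else 0) = c
        have : ∀ e c : ZMod 2, e + c + c = e := by decide
        exact this e c)

lemma sig_apply (i : B) (t : W) (e : ZMod 2) :
    sig cs i (t, e) = (cs.simple i * t * cs.simple i, e + chi t (cs.simple i)) := by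
  rfl

lemma sum_range_shift (F : ℕ → ZMod 2) (m : ℕ) (hF : ∀ k, F (k + m) = F k) (d : ℕ) :
    ∑ k ∈ Finset.range m, F (k + d) = ∑ k ∈ Finset.range m, F k := by
  induction d with
  | zero => simp
  | succ d ih =>
    have h1 : ∑ k ∈ Finset.range m, F (k + (d + 1))
        = ∑ k ∈ Finset.range m, F ((k + 1) + d) := by
      apply Finset.sum_congr rfl
      intro k _
      congr 1
      omega
    have e1 := Finset.sum_range_succ' (fun k => F (k + d)) m
    have e2 := Finset.sum_range_succ (fun k => F (k + d)) m
    have e3 : F (m + d) = F (0 + d) := by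
      rw [zero_add, show m + d = d + m by omega, hF d]
    rw [e3] at e2
    have key : ∑ k ∈ Finset.range m, F ((k + 1) + d) = ∑ k ∈ Finset.range m, F (k + d) :=
      add_right_cancel (e1.symm.trans e2)
    rw [h1, key, ih]

lemma sum_range_split (F : ℕ → ZMod 2) (m n : ℕ) :
    ∑ k ∈ Finset.range (m + n), F k
      = ∑ k ∈ Finset.range m, F k + ∑ k ∈ Finset.range n, F (k + m) := by
  induction n with
  | zero => simp
  | succ n ih =>
    have hFc : F (m + n) = F (n + m) := by rw [Nat.add_comm]
    rw [show m + (n + 1) = (m + n) + 1 by omega, Finset.sum_range_succ, ih,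
      Finset.sum_range_succ (fun k => F (k + m)) n, add_assoc, hFc]

theorem sig_liftable : M.IsLiftable (sig cs) := by
  intro i i'
  set a := cs.simple i with ha
  set b := cs.simple i' with hb
  set g := a * b with hg
  set m := M i i' with hm
  have hgm : g ^ m = 1 := cs.simple_mul_simple_pow i i'
  have hginv : g⁻¹ = b * a := by
    rw [hg, mul_inv_rev, hb, ha, cs.inv_simple, cs.inv_simple]
  have hbab : b * a * b = g⁻¹ * b := by rw [hginv, mul_assoc]
  have hbg : b * g = g⁻¹ * b := by
    rw [hg, hginv, ← mul_assoc]
  have hbgn : ∀ n : ℕ, b * g ^ n = (g⁻¹) ^ n * b := by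
    intro n
    induction n with
    | zero => simp
    | succ n ih =>
      rw [pow_succ, ← mul_assoc, ih, mul_assoc, hbg, ← mul_assoc, ← pow_succ]
  set r : ℕ → W := fun k => (g ^ k)⁻¹ * b * g ^ k with hr
  set q : ℕ → W := fun k => (g ^ k)⁻¹ * (b * a * b) * g ^ k with hq
  have rform : ∀ j, r j = (g⁻¹) ^ (j + j) * b := by
    intro j
    show (g ^ j)⁻¹ * b * g ^ j = _
    rw [mul_assoc, hbgn j, ← mul_assoc, ← inv_pow, ← pow_add]
  have qform : ∀ j, q j = (g⁻¹) ^ (j + j + 1) * b := by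
    intro j
    show (g ^ j)⁻¹ * (b * a * b) * g ^ j = _
    rw [hbab, mul_assoc, mul_assoc, hbgn j, ← mul_assoc, ← mul_assoc, ← inv_pow,
      show (g⁻¹) ^ j * g⁻¹ * (g⁻¹) ^ j = (g⁻¹) ^ (j + 1 + j) by
        rw [pow_add, pow_add, pow_one],
      show j + 1 + j = j + j + 1 by omega]
  have hginvm : (g⁻¹) ^ m = 1 := by rw [inv_pow, hgm, inv_one]
  have hper : ∀ k, (g⁻¹) ^ (k + m) = (g⁻¹) ^ k := by
    intro k; rw [pow_add, hginvm, mul_one]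
  have rper : ∀ k, r (k + m) = r k := by
    intro k
    rw [rform, rform, show (k + m) + (k + m) = ((k + k) + m) + m by omega, hper, hper]
  have tau_apply : ∀ (t : W) (e : ZMod 2),
      (sig cs i * sig cs i') (t, e) = (g * t * g⁻¹, e + (chi t b + chi t (b * a * b))) := by
    intro t e
    rw [Equiv.Perm.mul_apply, sig_apply, sig_apply]
    have hfst : a * (b * t * b) * a = g * t * g⁻¹ := by
      rw [hg, hginv]; group
    have hbb : b * b = 1 := by rw [hb]; exact cs.simple_mul_simple_self i'
    have hbcancel : ∀ x : W, b * (b * x * b) * b = x := by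
      intro x
      rw [show b * (b * x * b) * b = (b * b) * x * (b * b) from by group, hbb,
        one_mul, mul_one]
    have hsnd : chi (b * t * b) a = chi t (b * a * b) := by
      simp only [chi]
      refine if_congr ?_ rfl rfl
      constructor <;> intro h
      · have h2 := congrArg (fun x => b * x * b) h
        rw [hbcancel t] at h2
        exact h2
      · rw [h]
        exact hbcancel a
    rw [← ha, ← hb, hfst, hsnd, add_assoc]
  have tau_pow : ∀ (n : ℕ) (t : W) (e : ZMod 2),
      ((sig cs i * sig cs i') ^ n) (t, e)
        = (g ^ n * t * (g ^ n)⁻¹,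
            e + ∑ k ∈ Finset.range n, (chi t (r k) + chi t (q k))) := by
    intro n
    induction n with
    | zero => intro t e; simp
    | succ n ih =>
      intro t e
      rw [pow_succ' (sig cs i * sig cs i') n, Equiv.Perm.mul_apply, ih, tau_apply]
      have hfst : g * (g ^ n * t * (g ^ n)⁻¹) * g⁻¹ = g ^ (n + 1) * t * (g ^ (n + 1))⁻¹ := by
        rw [pow_succ' g n]; group
      have hc1 : chi (g ^ n * t * (g ^ n)⁻¹) b = chi t (r n) := by
        simp only [chi]
        exact if_congr (conj_iff t b (g ^ n)) rfl rfl
      have hc2 : chi (g ^ n * t * (g ^ n)⁻¹) (b * a * b) = chi t (q n) := by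
        simp only [chi]
        exact if_congr (conj_iff t (b * a * b) (g ^ n)) rfl rfl
      rw [hfst, hc1, hc2, Finset.sum_range_succ]
      refine Prod.ext rfl ?_
      show e + _ + _ = e + _
      ring
  refine Equiv.ext ?_
  rintro ⟨t, e⟩
  rw [tau_pow m t e]
  have hsum : ∑ k ∈ Finset.range m, (chi t (r k) + chi t (q k)) = 0 := by
    have addself : ∀ x : ZMod 2, x + x = 0 := by decide
    rcases Nat.even_or_odd m with hme | hmo
    · obtain ⟨e', he'⟩ := hme
      have hshift : ∀ k, chi t (r (k + e')) + chi t (q (k + e'))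
          = chi t (r k) + chi t (q k) := by
        intro k
        have h1 : r (k + e') = r k := by
          rw [rform, rform, show (k + e') + (k + e') = (k + k) + m by omega, hper]
        have h2 : q (k + e') = q k := by
          rw [qform, qform, show (k + e') + (k + e') + 1 = (k + k + 1) + m by omega, hper]
        rw [h1, h2]
      rw [he', sum_range_split]
      rw [Finset.sum_congr rfl (fun k _ => hshift k)]
      exact addself _
    · obtain ⟨dd, hdd⟩ := hmo
      set d := dd + 1 with hd
      have hqr : ∀ k, q k = r (k + d) := by
        intro k
        rw [qform, rform, show (k + d) + (k + d) = (k + k + 1) + m by omega, hper]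
      rw [Finset.sum_add_distrib]
      have h2 : ∑ k ∈ Finset.range m, chi t (q k)
          = ∑ k ∈ Finset.range m, chi t (r (k + d)) :=
        Finset.sum_congr rfl (fun k _ => by rw [hqr k])
      have h3 : ∑ k ∈ Finset.range m, chi t (r (k + d))
          = ∑ k ∈ Finset.range m, chi t (r k) :=
        sum_range_shift (fun k => chi t (r k)) m
          (fun k => by show chi t (r (k + m)) = chi t (r k); rw [rper k]) d
      rw [h2, h3]
      exact addself _
  rw [hsum, hgm]
  simp

/-- The parity homomorphism into permutations of `W × ZMod 2`. -/
noncomputable def phi : W →* Equiv.Perm (W × ZMod 2) :=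
  cs.lift ⟨sig cs, sig_liftable cs⟩

/-- The parity cocycle. -/
noncomputable def eta (w t : W) : ZMod 2 := ((phi cs w) (t, 0)).2

lemma phi_simple (i : B) : phi cs (cs.simple i) = sig cs i :=
  cs.lift_apply_simple (sig_liftable cs) i

lemma eta_one (t : W) : eta cs 1 t = 0 := by
  simp [eta, map_one]

lemma phi_apply (w : W) : ∀ (t : W) (e : ZMod 2),
    phi cs w (t, e) = (w * t * w⁻¹, e + eta cs w t) := by
  refine cs.simple_induction_left
    (p := fun v => ∀ (t : W) (e : ZMod 2),
      phi cs v (t, e) = (v * t * v⁻¹, e + eta cs v t)) w ?_ ?_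
  · intro t e
    simp [map_one, eta_one]
  · intro w i ih t e
    have hmul : phi cs (cs.simple i * w) = phi cs (cs.simple i) * phi cs w := map_mul _ _ _
    have happ : ∀ e' : ZMod 2, phi cs (cs.simple i * w) (t, e')
        = (cs.simple i * (w * t * w⁻¹) * cs.simple i,
            (e' + eta cs w t) + chi (w * t * w⁻¹) (cs.simple i)) := by
      intro e'
      rw [hmul, Equiv.Perm.mul_apply, ih t e', phi_simple, sig_apply]
    have heta : eta cs (cs.simple i * w) t
        = eta cs w t + chi (w * t * w⁻¹) (cs.simple i) := by
      show (phi cs (cs.simple i * w) (t, 0)).2 = _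
      rw [happ 0, zero_add]
    rw [happ e]
    refine Prod.ext ?_ ?_
    · show cs.simple i * (w * t * w⁻¹) * cs.simple i
        = (cs.simple i * w) * t * (cs.simple i * w)⁻¹
      rw [mul_inv_rev, cs.inv_simple]
      group
    · show (e + eta cs w t) + chi (w * t * w⁻¹) (cs.simple i)
        = e + eta cs (cs.simple i * w) t
      rw [heta, add_assoc]

lemma eta_cocycle (u v t : W) :
    eta cs (u * v) t = eta cs v t + eta cs u (v * t * v⁻¹) := by
  unfold eta
  rw [map_mul, Equiv.Perm.mul_apply, phi_apply, phi_apply, phi_apply]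
  simp [zero_add]

lemma eta_simple (i : B) (t : W) : eta cs (cs.simple i) t = chi t (cs.simple i) := by
  unfold eta
  rw [phi_simple, sig_apply, zero_add]

lemma ris_cons (i : B) (ω : List B) :
    cs.rightInvSeq (i :: ω)
      = ((cs.wordProd ω)⁻¹ * cs.simple i * cs.wordProd ω) :: cs.rightInvSeq ω := rfl

lemma eta_wordProd_zero (t : W) (ω : List B) (hmem : t ∉ cs.rightInvSeq ω) :
    eta cs (cs.wordProd ω) t = 0 := by
  induction ω with
  | nil => rw [cs.wordProd_nil]; exact eta_one cs t
  | cons i ω ih =>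
    rw [ris_cons] at hmem
    have h1 : t ∉ cs.rightInvSeq ω := fun hc => hmem (List.mem_cons_of_mem _ hc)
    have h2 : t ≠ (cs.wordProd ω)⁻¹ * cs.simple i * cs.wordProd ω := fun hc =>
      hmem (hc ▸ List.mem_cons_self)
    rw [cs.wordProd_cons, eta_cocycle, ih h1, eta_simple, zero_add]
    simp only [chi]
    rw [if_neg]
    intro hc
    rw [conj_iff] at hc
    exact h2 hc

lemma eta_lt {w t : W} (hη : eta cs w t = 1) : cs.length (w * t) < cs.length w := by
  obtain ⟨ω, hred, rfl⟩ := cs.exists_reduced_word' w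
  have hmem : t ∈ cs.rightInvSeq ω := by
    by_contra h
    rw [eta_wordProd_zero cs t ω h] at hη
    exact absurd hη (by decide)
  exact (cs.isRightInversion_of_mem_rightInvSeq hred hmem).2

lemma eta_inv_eq (v x : W) : eta cs v⁻¹ (v * x * v⁻¹) = eta cs v x := by
  have h := eta_cocycle cs v v⁻¹ (v * x * v⁻¹)
  rw [mul_inv_cancel, eta_one] at h
  rw [show v⁻¹ * (v * x * v⁻¹) * (v⁻¹)⁻¹ = x from by group] at h
  have : ∀ x y : ZMod 2, 0 = x + y → x = y := by decide
  exact this _ _ h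

lemma eta_self {t : W} (ht : cs.IsReflection t) : eta cs t t = 1 := by
  obtain ⟨v, i, rfl⟩ := ht
  set t := v * cs.simple i * v⁻¹ with ht0
  have e1 : eta cs t t = eta cs (cs.simple i * v⁻¹) t + eta cs v (cs.simple i) := by
    have h := eta_cocycle cs v (cs.simple i * v⁻¹) t
    rw [show v * (cs.simple i * v⁻¹) = t from by rw [ht0]; group] at h
    rw [show (cs.simple i * v⁻¹) * t * (cs.simple i * v⁻¹)⁻¹ = cs.simple i from by
      rw [ht0]; group] at h
    exact h
  have e2 : eta cs (cs.simple i * v⁻¹) t = eta cs v⁻¹ t + 1 := by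
    have h := eta_cocycle cs (cs.simple i) v⁻¹ t
    rw [show v⁻¹ * t * (v⁻¹)⁻¹ = cs.simple i from by rw [ht0]; group] at h
    rw [eta_simple] at h
    rw [h]
    congr 1
    simp [chi]
  have e3 : eta cs v⁻¹ t = eta cs v (cs.simple i) := by
    rw [ht0]
    exact eta_inv_eq cs v (cs.simple i)
  rw [e1, e2, e3]
  have : ∀ x : ZMod 2, x + 1 + x = 1 := by decide
  exact this _

lemma eta_iff {t : W} (ht : cs.IsReflection t) (w : W) :
    cs.length (w * t) < cs.length w ↔ eta cs w t = 1 := by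
  constructor
  · intro hlt
    rcases (by decide : ∀ x : ZMod 2, x = 0 ∨ x = 1) (eta cs w t) with h0 | h1
    · exfalso
      have h2 : eta cs (w * t) t = 1 := by
        have h := eta_cocycle cs w t t
        rw [show t * t * t⁻¹ = t from by group] at h
        rw [h, eta_self cs ht, h0, add_zero]
      have h3 := eta_lt cs h2
      rw [mul_assoc, ht.mul_self, mul_one] at h3
      omega
    · exact h1
  · exact eta_lt cs

lemma eta_left_iff {t : W} (ht : cs.IsReflection t) (w : W) :
    cs.length (t * w) < cs.length w ↔ eta cs w⁻¹ t = 1 := by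
  have h1 : cs.length (t * w) = cs.length (w⁻¹ * t) := by
    rw [← cs.length_inv (w⁻¹ * t), mul_inv_rev, inv_inv, ht.inv]
  have h2 : cs.length w = cs.length w⁻¹ := (cs.length_inv w).symm
  rw [h1, h2]
  exact eta_iff cs ht w⁻¹

variable (I : Set B)

lemma wordProd_mem_parab {ω : List B} (h : ∀ j ∈ ω, j ∈ I) :
    cs.wordProd ω ∈ parab cs I := by
  induction ω with
  | nil => rw [cs.wordProd_nil]; exact one_mem _
  | cons i ω ih =>
    rw [cs.wordProd_cons]
    exact mul_mem (Subgroup.subset_closure ⟨i, h i List.mem_cons_self, rfl⟩)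
      (ih fun j hj => h j (List.mem_cons_of_mem i hj))

lemma exists_word_of_mem_parab {p : W} (hp : p ∈ parab cs I) :
    ∃ ω : List B, (∀ j ∈ ω, j ∈ I) ∧ p = cs.wordProd ω := by
  refine Subgroup.closure_induction ?_ ?_ ?_ ?_ hp
  · rintro x ⟨i, hi, rfl⟩
    exact ⟨[i], by simpa using hi, (cs.wordProd_singleton i).symm⟩
  · exact ⟨[], by simp, (cs.wordProd_nil).symm⟩
  · rintro x y _ _ ⟨ω₁, h₁, rfl⟩ ⟨ω₂, h₂, rfl⟩
    refine ⟨ω₁ ++ ω₂, ?_, (cs.wordProd_append ω₁ ω₂).symm⟩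
    intro j hj
    rcases List.mem_append.mp hj with h | h
    · exact h₁ j h
    · exact h₂ j h
  · rintro x _ ⟨ω, h₁, rfl⟩
    refine ⟨ω.reverse, ?_, (cs.wordProd_reverse ω).symm⟩
    intro j hj
    exact h₁ j (List.mem_reverse.mp hj)

lemma eta_parab_zero {p r : W} (hp : p ∈ parab cs I) (hr : r ∉ parab cs I) :
    eta cs p r = 0 := by
  obtain ⟨ω, hω, rfl⟩ := exists_word_of_mem_parab cs I hp
  clear hp
  revert hω
  induction ω with
  | nil => intro _; rw [cs.wordProd_nil]; exact eta_one cs r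
  | cons i ω ih =>
    intro hω
    have hωt : ∀ j ∈ ω, j ∈ I := fun j hj => hω j (List.mem_cons_of_mem i hj)
    rw [cs.wordProd_cons, eta_cocycle, ih hωt, eta_simple, zero_add]
    simp only [chi]
    rw [if_neg]
    intro hcon
    rw [conj_iff] at hcon
    apply hr
    rw [hcon]
    have h1 : cs.wordProd ω ∈ parab cs I := wordProd_mem_parab cs I hωt
    exact mul_mem (mul_mem (inv_mem h1)
      (Subgroup.subset_closure ⟨i, hω i List.mem_cons_self, rfl⟩)) h1

/-! ### Coset lemmas -/

lemma mk_eq_iff (u w : W) :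
    (QuotientGroup.mk u : W ⧸ parab cs I) = QuotientGroup.mk w ↔ u⁻¹ * w ∈ parab cs I :=
  QuotientGroup.eq

lemma mk_tmul_congr {u w : W} (t : W)
    (h : (QuotientGroup.mk u : W ⧸ parab cs I) = QuotientGroup.mk w) :
    (QuotientGroup.mk (t * u) : W ⧸ parab cs I) = QuotientGroup.mk (t * w) := by
  rw [mk_eq_iff] at h ⊢
  rw [show (t * u)⁻¹ * (t * w) = u⁻¹ * w from by group]
  exact h

lemma conj_mem_congr {u w : W} (t : W)
    (h : (QuotientGroup.mk u : W ⧸ parab cs I) = QuotientGroup.mk w) :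
    (u⁻¹ * t * u ∈ parab cs I ↔ w⁻¹ * t * w ∈ parab cs I) := by
  rw [mk_eq_iff] at h
  constructor <;> intro hm
  · rw [show w⁻¹ * t * w = (u⁻¹ * w)⁻¹ * (u⁻¹ * t * u) * (u⁻¹ * w) from by group]
    exact mul_mem (mul_mem (inv_mem h) hm) h
  · rw [show u⁻¹ * t * u = (u⁻¹ * w) * (w⁻¹ * t * w) * (u⁻¹ * w)⁻¹ from by group]
    exact mul_mem (mul_mem h hm) (inv_mem h)

lemma mk_tmul_eq_iff {w t : W} (ht : cs.IsReflection t) :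
    (QuotientGroup.mk (t * w) : W ⧸ parab cs I) = QuotientGroup.mk w
      ↔ w⁻¹ * t * w ∈ parab cs I := by
  rw [mk_eq_iff]
  rw [show (t * w)⁻¹ * w = w⁻¹ * t⁻¹ * w from by group, ht.inv]

lemma sign_const {u w t : W} (ht : cs.IsReflection t)
    (h : (QuotientGroup.mk u : W ⧸ parab cs I) = QuotientGroup.mk w)
    (hout : u⁻¹ * t * u ∉ parab cs I) :
    (cs.length (t * u) < cs.length u ↔ cs.length (t * w) < cs.length w) := by
  rw [eta_left_iff cs ht u, eta_left_iff cs ht w]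
  have hp : u⁻¹ * w ∈ parab cs I := (mk_eq_iff cs I u w).mp h
  have hw : w⁻¹ = (u⁻¹ * w)⁻¹ * u⁻¹ := by group
  have hcoc := eta_cocycle cs (u⁻¹ * w)⁻¹ u⁻¹ t
  rw [← hw] at hcoc
  rw [show u⁻¹ * t * (u⁻¹)⁻¹ = u⁻¹ * t * u from by group] at hcoc
  rw [eta_parab_zero cs I (inv_mem hp) hout, add_zero] at hcoc
  rw [hcoc]

lemma fold_well {u w t : W} (ht : cs.IsReflection t)
    (h : (QuotientGroup.mk u : W ⧸ parab cs I) = QuotientGroup.mk w) :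
    (QuotientGroup.mk (foldW cs t u) : W ⧸ parab cs I) = QuotientGroup.mk (foldW cs t w) := by
  by_cases hmem : u⁻¹ * t * u ∈ parab cs I
  · have h1 : (QuotientGroup.mk (t * u) : W ⧸ parab cs I) = QuotientGroup.mk u :=
      (mk_tmul_eq_iff cs I ht).mpr hmem
    have h2 : (QuotientGroup.mk (t * w) : W ⧸ parab cs I) = QuotientGroup.mk w :=
      (mk_tmul_eq_iff cs I ht).mpr ((conj_mem_congr cs I t h).mp hmem)
    unfold foldW
    split_ifs
    · exact h1.trans (h.trans h2.symm)
    · exact h1.trans h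
    · exact h.trans h2.symm
    · exact h
  · unfold foldW
    by_cases hlt : cs.length (t * u) < cs.length u
    · rw [if_pos hlt, if_pos ((sign_const cs I ht h hmem).mp hlt)]
      exact mk_tmul_congr cs I t h
    · rw [if_neg hlt, if_neg (fun hc => hlt ((sign_const cs I ht h hmem).mpr hc))]
      exact h

lemma minLenQ_le {u : W} {x : W ⧸ parab cs I}
    (hu : (QuotientGroup.mk u : W ⧸ parab cs I) = x) : minLenQ cs I x ≤ cs.length u :=
  Nat.sInf_le ⟨u, hu, rfl⟩

lemma exists_minLenQ (x : W ⧸ parab cs I) :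
    ∃ u : W, (QuotientGroup.mk u : W ⧸ parab cs I) = x ∧ cs.length u = minLenQ cs I x := by
  have hne : (cs.length '' {u : W | (QuotientGroup.mk u : W ⧸ parab cs I) = x}).Nonempty := by
    refine ⟨cs.length x.out, x.out, ?_, rfl⟩
    exact QuotientGroup.out_eq' x
  obtain ⟨u, hu, hlen⟩ := Nat.sInf_mem hne
  exact ⟨u, hu, hlen⟩

end CosetFoldAux

open CosetFoldAux

/-- The coset left-folding map `t⁺(wW_I) := t⁺(w)W_I` is well defined (independent of the
representative), and satisfies `t⁺(wW_I) = twW_I` if `wW_I ∈ R_t^I` (i.e.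
`ℓ((tw)^I) < ℓ(w^I)`) and `t⁺(wW_I) = wW_I` if `wW_I ∈ L_t^I ∪ F_t^I` (i.e.
`ℓ((tw)^I) ≥ ℓ(w^I)`). -/
theorem foldQ_well_defined (cs : CoxeterSystem M W) (I : Set B) (t : W)
    (ht : cs.IsReflection t) :
    (∀ w : W, foldQ cs I t (QuotientGroup.mk w) =
        (QuotientGroup.mk (foldW cs t w) : W ⧸ parab cs I)) ∧
    (∀ w : W,
      (minLenQ cs I (QuotientGroup.mk (t * w)) < minLenQ cs I (QuotientGroup.mk w) →
        foldQ cs I t (QuotientGroup.mk w) = (QuotientGroup.mk (t * w) : W ⧸ parab cs I)) ∧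
      (minLenQ cs I (QuotientGroup.mk w) ≤ minLenQ cs I (QuotientGroup.mk (t * w)) →
        foldQ cs I t (QuotientGroup.mk w) = (QuotientGroup.mk w : W ⧸ parab cs I))) := by
  have hpart1 : ∀ w : W, foldQ cs I t (QuotientGroup.mk w) =
      (QuotientGroup.mk (foldW cs t w) : W ⧸ parab cs I) := by
    intro w
    show (QuotientGroup.mk (foldW cs t (QuotientGroup.mk w : W ⧸ parab cs I).out) :
        W ⧸ parab cs I) = QuotientGroup.mk (foldW cs t w)
    exact fold_well cs I ht (QuotientGroup.out_eq' (QuotientGroup.mk w : W ⧸ parab cs I))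
  refine ⟨hpart1, ?_⟩
  intro w
  constructor
  · intro hlt
    have hne : (QuotientGroup.mk (t * w) : W ⧸ parab cs I) ≠ QuotientGroup.mk w := by
      intro hc
      rw [hc] at hlt
      exact lt_irrefl _ hlt
    have hout : w⁻¹ * t * w ∉ parab cs I := fun hc =>
      hne ((mk_tmul_eq_iff cs I ht).mpr hc)
    obtain ⟨b, hb, hlb⟩ := exists_minLenQ cs I (QuotientGroup.mk (t * w) : W ⧸ parab cs I)
    have hub : (QuotientGroup.mk (t * b) : W ⧸ parab cs I) = QuotientGroup.mk w := by
      have := mk_tmul_congr cs I t hb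
      rw [show t * (t * w) = w from by rw [← mul_assoc, ht.mul_self, one_mul]] at this
      exact this
    have hout' : (t * b)⁻¹ * t * (t * b) ∉ parab cs I := fun hc =>
      hout ((conj_mem_congr cs I t hub).mp hc)
    have h1 : cs.length (t * (t * b)) < cs.length (t * b) := by
      rw [show t * (t * b) = b from by rw [← mul_assoc, ht.mul_self, one_mul]]
      calc cs.length b = minLenQ cs I (QuotientGroup.mk (t * w)) := hlb
        _ < minLenQ cs I (QuotientGroup.mk w) := hlt
        _ ≤ cs.length (t * b) := minLenQ_le cs I hub
    have hltw : cs.length (t * w) < cs.length w :=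
      (sign_const cs I ht hub hout').mp h1
    rw [hpart1 w]
    unfold foldW
    rw [if_pos hltw]
  · intro hle
    by_cases hmem : w⁻¹ * t * w ∈ parab cs I
    · have h1 : (QuotientGroup.mk (t * w) : W ⧸ parab cs I) = QuotientGroup.mk w :=
        (mk_tmul_eq_iff cs I ht).mpr hmem
      rw [hpart1 w]
      unfold foldW
      split_ifs
      · exact h1
      · rfl
    · have hnlt : ¬ cs.length (t * w) < cs.length w := by
        intro hlt
        obtain ⟨a, ha, hla⟩ := exists_minLenQ cs I (QuotientGroup.mk w : W ⧸ parab cs I)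
        have houta : a⁻¹ * t * a ∉ parab cs I := fun hc =>
          hmem ((conj_mem_congr cs I t ha).mp hc)
        have hlta : cs.length (t * a) < cs.length a :=
          (sign_const cs I ht ha houta).mpr hlt
        have h2 : minLenQ cs I (QuotientGroup.mk (t * w)) ≤ cs.length (t * a) :=
          minLenQ_le cs I (mk_tmul_congr cs I t ha)
        omega
      rw [hpart1 w]
      unfold foldW
      rw [if_neg hnlt]
end
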